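/- arXiv:2410.09887 — 6 statements merged into one kernel-verified Lean document; each statement's English description precedes it below -/
import Mathlib

section
/- Let k ⊆ K be a separable field extension of characteristic p > 0 and let x ∈ K be separably algebraic over k. Then the extension k(x) ⊆ K is separable. -/
/-- Subfields `L` and `M` of an ambient field are linearly disjoint over a common
subfield `F` if every finite tuple of elements of `L` that is linearly independent
over `F` remains linearly independent over `M`. -/
def LinDisj {K : Type*} [Field K] (F L M : Subfield K) : Prop :=
  ∀ (n : ℕ) (a : Fin n → K), (∀ i, a i ∈ L) →
    LinearIndependent ↥F a → LinearIndependent ↥M a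

/-- The extension `F ⊆ K` (of characteristic `p`) is separable if `F` is linearly
disjoint from `K^p` over `F^p`. -/
def SepExt {K : Type*} [Field K] (p : ℕ) [Fact p.Prime] [CharP K p]
    (F : Subfield K) : Prop :=
  LinDisj (F.map (frobenius K p)) F ((⊤ : Subfield K).map (frobenius K p))

open Finset in
lemma li_map_rows {F E : Type*} [Field F] [Field E] (σ : F →+* E) {n m : ℕ}
    {v : Fin n → Fin m → F} (hv : LinearIndependent F v) :
    LinearIndependent E (fun i => (σ ∘ v i : Fin m → E)) := by
  classical
  have hv' := Fintype.linearIndependent_iff.1 hv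
  let f : (Fin n → F) →ₗ[F] (Fin m → F) :=
    { toFun := fun d => ∑ i, d i • v i
      map_add' := fun a b => by simp [add_smul, Finset.sum_add_distrib]
      map_smul' := fun c a => by simp [smul_smul, Finset.smul_sum] }
  have hinj : LinearMap.ker f = ⊥ := by
    rw [LinearMap.ker_eq_bot']
    intro d hd
    funext i
    exact hv' d hd i
  obtain ⟨g, hg⟩ := f.exists_leftInverse_of_injective hinj
  set A := LinearMap.toMatrix' g with hA
  have hgA : ∀ w, g w = A.mulVec w := fun w => by
    rw [hA, ← Matrix.toLin'_apply, Matrix.toLin'_toMatrix']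
  have hfi : ∀ i, f (Pi.single i 1) = v i := by
    intro i
    have h0 : f (Pi.single i 1) = ∑ k, (Pi.single i (1:F) : Fin n → F) k • v k := rfl
    rw [h0, Finset.sum_eq_single i]
    · simp
    · intro b _ hb; rw [Pi.single_eq_of_ne hb, zero_smul]
    · intro h; exact absurd (mem_univ i) h
  have hAv : ∀ i, A.mulVec (v i) = Pi.single i 1 := by
    intro i
    rw [← hgA, ← hfi i]
    exact congrFun (congrArg DFunLike.coe hg) (Pi.single i 1)
  rw [Fintype.linearIndependent_iff]
  intro c hc r
  have hcj : ∀ j, ∑ i, c i * σ (v i j) = 0 := by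
    intro j
    have := congrFun hc j
    simpa [Finset.sum_apply] using this
  have key : ∀ i, σ ((Pi.single i (1:F) : Fin n → F) r) = if i = r then 1 else 0 := by
    intro i
    by_cases h : i = r
    · subst h; simp
    · rw [Pi.single_eq_of_ne (Ne.symm h)]
      simp [h]
  calc c r = ∑ i, c i * σ ((Pi.single i (1:F) : Fin n → F) r) := by
        rw [Finset.sum_congr rfl fun i _ => by rw [key i]]
        simp [Finset.sum_ite_eq' Finset.univ r c]
    _ = ∑ i, c i * σ ((A.mulVec (v i)) r) := by
        refine Finset.sum_congr rfl fun i _ => ?_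
        rw [hAv i]
    _ = ∑ i, ∑ j, σ (A r j) * (c i * σ (v i j)) := by
        refine Finset.sum_congr rfl fun i _ => ?_
        rw [Matrix.mulVec, dotProduct, map_sum, Finset.mul_sum]
        refine Finset.sum_congr rfl fun j _ => ?_
        rw [map_mul]; ring
    _ = ∑ j, σ (A r j) * ∑ i, c i * σ (v i j) := by
        rw [Finset.sum_comm]
        refine Finset.sum_congr rfl fun j _ => ?_
        rw [Finset.mul_sum]
    _ = 0 := by simp [hcj]

set_option maxHeartbeats 1000000 in
set_option synthInstance.maxHeartbeats 400000 in
/-- If `k ⊆ K` is a separable extension of characteristic `p > 0` and `x ∈ K` is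
separably algebraic over `k`, then the extension `k(x) ⊆ K` is separable. -/
theorem sepExt_adjoin_separable {K : Type*} [Field K] (p : ℕ) [Fact p.Prime]
    [CharP K p] (k : Subfield K) (hk : SepExt p k) (x : K)
    (hx : IsSeparable ↥k x) :
    SepExt p (k ⊔ Subfield.closure {x}) := by
  classical
  unfold SepExt LinDisj
  intro n a haL ha
  set L : Subfield K := k ⊔ Subfield.closure {x} with hLdef
  set Lp : Subfield K := L.map (frobenius K p) with hLpdef
  set kp : Subfield K := k.map (frobenius K p) with hkpdef
  set Kp : Subfield K := (⊤ : Subfield K).map (frobenius K p) with hKpdef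
  have hkL : k ≤ L := le_sup_left
  have hxL : x ∈ L := (le_sup_right : Subfield.closure {x} ≤ L)
    (Subfield.subset_closure rfl)
  have hkpLp : kp ≤ Lp := by
    rintro y ⟨z, hz, rfl⟩; exact ⟨z, hkL hz, rfl⟩
  have hLpKp : Lp ≤ Kp := by
    rintro y ⟨z, hz, rfl⟩; exact ⟨z, trivial, rfl⟩
  have smul_def : ∀ (S : Subfield K) (c : ↥S) (y : K), c • y = (c : K) * y :=
    fun _ _ _ => rfl
  -- Step A : every element of L lies in the Lp-span of k
  haveI : CharP ↥k p := (algebraMap ↥k K).charP Subtype.val_injective p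
  haveI : ExpChar ↥k p := ExpChar.prime Fact.out
  have hxint : IsIntegral ↥k x := hx.isIntegral
  have hmemL : ∀ y, y ∈ L ↔ y ∈ IntermediateField.adjoin ↥k {x} := by
    intro y
    have hrg : Set.range (algebraMap ↥k K) = (k : Set K) := by
      apply Set.eq_of_subset_of_subset
      · rintro _ ⟨z, rfl⟩; exact z.2
      · intro y hy; exact ⟨⟨y, hy⟩, rfl⟩
    have h9 : (y ∈ IntermediateField.adjoin ↥k {x}) =
        (y ∈ Subfield.closure (Set.range (algebraMap ↥k K) ∪ {x})) := rfl
    rw [h9, hrg, Subfield.closure_union, Subfield.closure_eq]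
  have hxadj : x ∈ Algebra.adjoin ↥k ({x ^ p} : Set K) := by
    haveI := (IntermediateField.isSeparable_adjoin_simple_iff_isSeparable ↥k K).2 hx
    have h := IntermediateField.adjoin_eq_adjoin_pow_expChar_of_isSeparable ↥k K ({x} : Set K) p
    rw [Set.image_singleton] at h
    have hx2 : x ∈ IntermediateField.adjoin ↥k ({x ^ p} : Set K) := by
      rw [← h]; exact IntermediateField.mem_adjoin_simple_self ↥k x
    have h3 := IntermediateField.adjoin_simple_toSubalgebra_of_isAlgebraic (hxint.pow p).isAlgebraic
    rw [← h3]
    exact (IntermediateField.mem_toSubalgebra _ _).2 hx2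
  have hLadj : ∀ y ∈ L, y ∈ Algebra.adjoin ↥k ({x} : Set K) := by
    intro y hy
    have h3 := IntermediateField.adjoin_simple_toSubalgebra_of_isAlgebraic hxint.isAlgebraic
    rw [← h3]
    exact (IntermediateField.mem_toSubalgebra _ _).2 ((hmemL y).1 hy)
  set S : Submodule ↥Lp K := Submodule.span ↥Lp ((k : Set K)) with hSdef
  have h1S : (1 : K) ∈ S := Submodule.subset_span k.one_mem
  have hmulS : ∀ y ∈ S, ∀ z ∈ S, y * z ∈ S := by
    intro y hy
    induction hy using Submodule.span_induction with
    | mem c hc =>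
      intro z hz
      induction hz using Submodule.span_induction with
      | mem d hd => exact Submodule.subset_span (Subfield.mul_mem k hc hd)
      | zero => rw [mul_zero]; exact S.zero_mem
      | add u w _ _ ihu ihw => rw [mul_add]; exact S.add_mem ihu ihw
      | smul t w _ ihw => rw [mul_smul_comm]; exact S.smul_mem t ihw
    | zero => intro z hz; rw [zero_mul]; exact S.zero_mem
    | add u w _ _ ihu ihw => intro z hz; rw [add_mul]; exact S.add_mem (ihu z hz) (ihw z hz)
    | smul t w _ ihw => intro z hz; rw [smul_mul_assoc]; exact S.smul_mem t (ihw z hz)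
  let Salg : Subalgebra ↥k K :=
    { carrier := (S : Set K)
      mul_mem' := fun {a b} ha hb => hmulS a ha b hb
      one_mem' := h1S
      add_mem' := fun {a b} ha hb => S.add_mem ha hb
      zero_mem' := S.zero_mem
      algebraMap_mem' := fun c => Submodule.subset_span c.2 }
  have hmemSalg : ∀ y : K, y ∈ Salg ↔ y ∈ S := fun y => Iff.rfl
  have hxpLp : x ^ p ∈ Lp := ⟨x, hxL, rfl⟩
  have hxpS : x ^ p ∈ S := by
    have h4 : x ^ p = (⟨x ^ p, hxpLp⟩ : ↥Lp) • (1 : K) := by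
      rw [smul_def]; rw [mul_one]
    rw [h4]; exact S.smul_mem _ h1S
  have hxS : x ∈ S := by
    have hle : Algebra.adjoin ↥k ({x ^ p} : Set K) ≤ Salg :=
      Algebra.adjoin_le (Set.singleton_subset_iff.2 ((hmemSalg _).2 hxpS))
    exact (hmemSalg _).1 (hle hxadj)
  have hLS : ∀ y ∈ L, y ∈ S := by
    intro y hy
    have hle : Algebra.adjoin ↥k ({x} : Set K) ≤ Salg :=
      Algebra.adjoin_le (Set.singleton_subset_iff.2 ((hmemSalg _).2 hxS))
    exact (hmemSalg _).1 (hle (hLadj y hy))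
  -- Step B
  have haS : ∀ i, a i ∈ S := fun i => hLS (a i) (haL i)
  choose t ht1 ht2 using fun i => Submodule.mem_span_finite_of_mem_span (haS i)
  set T : Finset K := Finset.univ.biUnion t with hT
  have hTk : (T : Set K) ⊆ (k : Set K) := by
    intro y hy
    rw [hT, Finset.coe_biUnion] at hy
    simp only [Set.mem_iUnion] at hy
    obtain ⟨i, _, hi⟩ := hy
    exact ht1 i hi
  have haT : ∀ i, a i ∈ Submodule.span ↥Lp (T : Set K) := by
    intro i
    refine Submodule.span_mono ?_ (ht2 i)
    intro y hy
    exact Finset.mem_coe.2 (Finset.mem_biUnion.2 ⟨i, Finset.mem_univ i, hy⟩)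
  obtain ⟨b, hbT, hspan, hbli⟩ := exists_linearIndependent ↥kp (T : Set K)
  have hbfin : b.Finite := T.finite_toSet.subset hbT
  set bs : Finset K := hbfin.toFinset with hbs
  set m : ℕ := bs.card with hm
  set eqv : ↥bs ≃ Fin m := bs.equivFin with heqv
  set e : Fin m → K := fun j => ↑(eqv.symm j) with he
  have hemem : ∀ j, e j ∈ b := fun j => hbfin.mem_toFinset.1 (eqv.symm j).2
  have he_k : ∀ j, e j ∈ k := fun j => hTk (hbT (hemem j))
  have he_li_kp : LinearIndependent ↥kp e := by
    have hf : ∀ j : Fin m, ((⟨e j, hemem j⟩ : b) : K) = e j := fun j => rfl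
    refine hbli.comp (fun j => ⟨e j, hemem j⟩) ?_
    intro j j' hjj'
    have h8 : e j = e j' := congrArg (fun z : ↥b => (z : K)) hjj'
    exact eqv.symm.injective (Subtype.ext h8)
  have he_li_Kp : LinearIndependent ↥Kp e := hk m e he_k he_li_kp
  have hkpLp_span : ∀ z ∈ Submodule.span ↥kp b, z ∈ Submodule.span ↥Lp b := by
    intro z hz
    induction hz using Submodule.span_induction with
    | mem y hy => exact Submodule.subset_span hy
    | zero => exact Submodule.zero_mem _
    | add u w _ _ ihu ihw => exact Submodule.add_mem _ ihu ihw
    | smul c w _ ihw =>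
      have hc : (c : K) ∈ Lp := hkpLp c.2
      have h5 : c • w = (⟨(c : K), hc⟩ : ↥Lp) • w := rfl
      rw [h5]; exact Submodule.smul_mem _ _ ihw
  have haE : ∀ i, a i ∈ Submodule.span ↥Lp (Set.range e) := by
    have hrange : Set.range e = b := by
      apply Set.eq_of_subset_of_subset
      · rintro y ⟨j, rfl⟩; exact hemem j
      · intro y hy
        exact ⟨eqv ⟨y, hbfin.mem_toFinset.2 hy⟩, by
          rw [he]; simp⟩
    rw [hrange]
    intro i
    have h6 : Submodule.span ↥Lp (T : Set K) ≤ Submodule.span ↥Lp b := by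
      rw [Submodule.span_le]
      intro y hy
      have : y ∈ Submodule.span ↥kp b := by
        rw [hspan]; exact Submodule.subset_span hy
      exact hkpLp_span y this
    exact h6 (haT i)
  have hexist := fun i => (Submodule.mem_span_range_iff_exists_fun ↥Lp).1 (haE i)
  choose t2 ht2e using hexist
  have htli : LinearIndependent ↥Lp t2 := by
    rw [Fintype.linearIndependent_iff]
    intro d hd i
    have ha' := Fintype.linearIndependent_iff.1 ha
    refine ha' d ?_ i
    have key : ∀ i', (d i' : K) * a i' = ∑ j, ((d i' * t2 i' j : ↥Lp) : K) * e j := by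
      intro i'
      rw [← ht2e i', Finset.mul_sum]
      refine Finset.sum_congr rfl fun j _ => ?_
      rw [smul_def]
      push_cast
      ring
    calc ∑ i', d i' • a i' = ∑ i', (d i' : K) * a i' := rfl
      _ = ∑ i', ∑ j, ((d i' * t2 i' j : ↥Lp) : K) * e j :=
          Finset.sum_congr rfl fun i' _ => key i'
      _ = ∑ j, ((∑ i', d i' * t2 i' j : ↥Lp) : K) * e j := by
          rw [Finset.sum_comm]
          refine Finset.sum_congr rfl fun j _ => ?_
          rw [← Finset.sum_mul]
          congr 1
          push_cast
          rfl
      _ = 0 := by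
          refine Finset.sum_eq_zero fun j _ => ?_
          have h7 : (∑ i', d i' * t2 i' j) = (0 : ↥Lp) := by
            have := congrFun hd j
            simpa [Finset.sum_apply] using this
          rw [h7]
          simp
  set σ : ↥Lp →+* ↥Kp := Subfield.inclusion hLpKp with hσ
  have hKli := li_map_rows σ htli
  rw [Fintype.linearIndependent_iff]
  intro g hg i
  set c : Fin m → ↥Kp := fun j => ∑ i', g i' * σ (t2 i' j) with hcdef
  have hc0 : ∀ j, c j = 0 := by
    have hsum : ∑ j, c j • e j = 0 := by
      have key : ∀ j, (c j : K) * e j = ∑ i', (g i' : K) * ((t2 i' j : K) * e j) := by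
        intro j
        rw [hcdef]
        push_cast
        rw [Finset.sum_mul]
        refine Finset.sum_congr rfl fun i' _ => ?_
        have hσc : ((σ (t2 i' j) : ↥Kp) : K) = ((t2 i' j : ↥Lp) : K) := rfl
        rw [hσc]
        ring
      calc ∑ j, c j • e j = ∑ j, (c j : K) * e j := rfl
        _ = ∑ j, ∑ i', (g i' : K) * ((t2 i' j : K) * e j) :=
            Finset.sum_congr rfl fun j _ => key j
        _ = ∑ i', (g i' : K) * a i' := by
            rw [Finset.sum_comm]
            refine Finset.sum_congr rfl fun i' _ => ?_
            rw [← Finset.mul_sum, ← ht2e i']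
            rfl
        _ = 0 := hg
    exact fun j => Fintype.linearIndependent_iff.1 he_li_Kp c hsum j
  have hzero : ∑ i', g i' • (σ ∘ t2 i') = (0 : Fin m → ↥Kp) := by
    funext j
    have := hc0 j
    rw [hcdef] at this
    simpa [Finset.sum_apply] using this
  exact Fintype.linearIndependent_iff.1 hKli g hzero i
end

section
/- Let k ⊆ K be a separable field extension of characteristic p > 0 and let A ⊆ K be a subset that is p-independent over k. Then the extension k(A) ⊆ K is separable. -/
set_option synthInstance.maxHeartbeats 400000
set_option maxHeartbeats 1000000

section AuxLemmas
variable {K : Type*} [Field K]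

/-- The monomial attached to an exponent vector. -/
noncomputable def mono (e : K →₀ ℕ) : K := e.prod fun a n => a ^ n

theorem mono_def (e : K →₀ ℕ) : mono e = e.prod fun a n => a ^ n := rfl
theorem li_subfield_iff {ι : Type*} (E : Subfield K) (v : ι → K) :
    LinearIndependent ↥E v ↔
      ∀ (t : Finset ι) (c : ι → K), (∀ i, c i ∈ E) →
        ∑ i ∈ t, c i * v i = 0 → ∀ i ∈ t, c i = 0 := by
  rw [linearIndependent_iff']
  constructor
  · intro h t c hc hsum i hi
    exact congrArg Subtype.val (h t (fun i => ⟨c i, hc i⟩) hsum i hi)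
  · intro h t g hsum i hi
    exact Subtype.ext (h t (fun i => ↑(g i)) (fun i => (g i).2) hsum i hi)

theorem pow_indep (p : ℕ) [Fact p.Prime] [CharP K p] (E : Subfield K) (a : K)
    (ha : a ∉ E) (hap : a ^ p ∈ E) :
    LinearIndependent ↥E (fun i : Fin p => a ^ (i : ℕ)) := by
  have hp : p.Prime := Fact.out
  set b : ↥E := ⟨a ^ p, hap⟩ with hbdef
  have hirr : Irreducible (Polynomial.X ^ p - Polynomial.C b) := by
    apply X_pow_sub_C_irreducible_of_prime hp
    intro y hy
    apply ha
    have h1 : (↑y : K) ^ p = a ^ p := by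
      have := congrArg (Subtype.val : ↥E → K) hy
      push_cast at this
      exact this
    have hba : (↑y : K) = a := frobenius_inj K p (by simpa [frobenius_def] using h1)
    exact hba ▸ y.2
  have hmonic : (Polynomial.X ^ p - Polynomial.C b).Monic :=
    Polynomial.monic_X_pow_sub_C b hp.ne_zero
  have heval : Polynomial.aeval a (Polynomial.X ^ p - Polynomial.C b) = 0 := by
    have hb : algebraMap ↥E K b = a ^ p := rfl
    simp [hb]
  have hmin : minpoly ↥E a = Polynomial.X ^ p - Polynomial.C b :=
    (minpoly.eq_of_irreducible_of_monic hirr heval hmonic).symm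
  have hdeg : (minpoly ↥E a).natDegree = p := by
    rw [hmin, Polynomial.natDegree_X_pow_sub_C]
  have := linearIndependent_pow (K := ↥E) (S := K) a
  rw [hdeg] at this
  exact this
theorem rows_indep_transfer {J : Type*} (F : Subfield K) {n : ℕ} (t : Finset J)
    (c : Fin n → J → K) (hc : ∀ i j, c i j ∈ F)
    (hind : ∀ d : Fin n → K, (∀ i, d i ∈ F) →
      (∀ j ∈ t, ∑ i, d i * c i j = 0) → ∀ i, d i = 0)
    (g : Fin n → K) (hg : ∀ j ∈ t, ∑ i, g i * c i j = 0) : ∀ i, g i = 0 := by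
  classical
  let ch : Fin n → (↥t → ↥F) := fun i j => ⟨c i ↑j, hc i ↑j⟩
  let φ : (↥t → ↥F) →ₗ[↥F] (Fin n → ↥F) :=
    { toFun := fun d i => ∑ j, d j * ch i j
      map_add' := by
        intro d₁ d₂; funext i; simp [add_mul, Finset.sum_add_distrib]
      map_smul' := by
        intro r d; funext i; simp [Finset.mul_sum, mul_assoc, smul_eq_mul] }
  have hφ : ∀ (d : ↥t → ↥F) (i : Fin n), φ d i = ∑ j, d j * ch i j := fun _ _ => rfl
  have hsurj : Function.Surjective φ := by
    rw [← LinearMap.range_eq_top]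
    by_contra hne
    obtain ⟨f, hf0, hfmap⟩ := Submodule.exists_dual_map_eq_bot_of_lt_top
      (lt_top_iff_ne_top.mpr hne) inferInstance
    have hker : ∀ d, f (φ d) = 0 := by
      intro d
      have h1 : f (φ d) ∈ (LinearMap.range φ).map f :=
        Submodule.mem_map_of_mem ⟨d, rfl⟩
      rw [hfmap] at h1
      exact h1
    set u : Fin n → ↥F := fun i => f (Pi.single i 1) with hu_def
    have hf_eq : ∀ y : Fin n → ↥F, f y = ∑ i, y i * u i := by
      intro y
      conv_lhs => rw [show y = ∑ i, Pi.single i (y i) from (Finset.univ_sum_single y).symm]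
      rw [map_sum]
      refine Finset.sum_congr rfl fun i _ => ?_
      have hsing : Pi.single i (y i) = y i • (Pi.single i (1 : ↥F) : Fin n → ↥F) := by
        funext j
        by_cases h : j = i <;> simp [h, Pi.single_apply, smul_eq_mul]
      rw [hsing, map_smul, smul_eq_mul, hu_def]
    have hurel : ∀ j ∈ t, ∑ i, (↑(u i) : K) * c i j = 0 := by
      intro j hj
      have h2 := hker (Pi.single (⟨j, hj⟩ : ↥t) 1)
      have h3 : φ (Pi.single (⟨j, hj⟩ : ↥t) 1) = fun i => ch i ⟨j, hj⟩ := by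
        funext i
        rw [hφ]
        simp [Pi.single_apply]
      rw [h3, hf_eq] at h2
      have h4 := congrArg (Subtype.val : ↥F → K) h2
      push_cast at h4
      rw [← h4]
      exact Finset.sum_congr rfl fun i _ => mul_comm _ _
    have hu0 : ∀ i, u i = 0 := fun i =>
      Subtype.ext (hind (fun i => ↑(u i)) (fun i => (u i).2) hurel i)
    apply hf0
    apply LinearMap.ext
    intro y
    rw [hf_eq]
    simp [hu0]
  intro i'
  obtain ⟨d, hd⟩ := hsurj (Pi.single i' 1)
  have key : ∀ i, ∑ j, (↑(d j) : K) * c i ↑j = if i = i' then 1 else 0 := by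
    intro i
    have h5 := congrArg (Subtype.val : ↥F → K) (congrFun hd i)
    rw [hφ] at h5
    push_cast at h5
    rw [h5, Pi.single_apply]
    split <;> simp
  calc g i' = ∑ i, g i * (if i = i' then 1 else 0) := by simp
    _ = ∑ i, g i * ∑ j, (↑(d j) : K) * c i ↑j := by
        refine Finset.sum_congr rfl fun i _ => by rw [key]
    _ = ∑ i, ∑ j : ↥t, g i * ((↑(d j) : K) * c i ↑j) := by
        exact Finset.sum_congr rfl fun i _ => Finset.mul_sum _ _ _
    _ = ∑ j : ↥t, ∑ i, g i * ((↑(d j) : K) * c i ↑j) := Finset.sum_comm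
    _ = ∑ j : ↥t, (↑(d j) : K) * ∑ i, g i * c i ↑j := by
        refine Finset.sum_congr rfl fun j _ => ?_
        rw [Finset.mul_sum]
        exact Finset.sum_congr rfl fun i _ => by ring
    _ = 0 := by
        refine Finset.sum_eq_zero fun j _ => ?_
        rw [hg ↑j j.2, mul_zero]
theorem span_indep_transfer {ι : Type*} (F M : Subfield K) (hFM : F ≤ M) (v : ι → K)
    (hv : ∀ (t : Finset ι) (c : ι → K), (∀ j, c j ∈ M) →
      ∑ j ∈ t, c j * v j = 0 → ∀ j ∈ t, c j = 0)
    {n : ℕ} (x : Fin n → K) (hx : ∀ i, x i ∈ Submodule.span ↥F (Set.range v))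
    (hxi : LinearIndependent ↥F x) : LinearIndependent ↥M x := by
  classical
  choose cc hcc using fun i => (Finsupp.mem_span_range_iff_exists_finsupp.mp (hx i))
  set t : Finset ι := Finset.univ.biUnion (fun i => (cc i).support) with ht
  have hsub : ∀ i, (cc i).support ⊆ t := fun i => by
    rw [ht]; exact Finset.subset_biUnion_of_mem (fun i => (cc i).support) (Finset.mem_univ i)
  have hrep : ∀ i, x i = ∑ j ∈ t, (↑(cc i j) : K) * v j := by
    intro i
    rw [← hcc i, Finsupp.sum_of_support_subset _ (hsub i) _ (fun j _ => by simp)]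
    rfl
  have hswap : ∀ (w : Fin n → K),
      ∑ i, w i * x i = ∑ j ∈ t, (∑ i, w i * ↑(cc i j)) * v j := by
    intro w
    calc ∑ i, w i * x i = ∑ i, ∑ j ∈ t, w i * (↑(cc i j) * v j) := by
          refine Finset.sum_congr rfl fun i _ => ?_
          rw [hrep i, Finset.mul_sum]
      _ = ∑ j ∈ t, ∑ i, w i * (↑(cc i j) * v j) := Finset.sum_comm
      _ = ∑ j ∈ t, (∑ i, w i * ↑(cc i j)) * v j := by
          refine Finset.sum_congr rfl fun j _ => ?_
          rw [Finset.sum_mul]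
          exact Finset.sum_congr rfl fun i _ => by ring
  rw [Fintype.linearIndependent_iff] at hxi ⊢
  intro g hg
  have hg' : ∑ i, (↑(g i) : K) * x i = 0 := hg
  have hrel := hv t (fun j => ∑ i, (↑(g i) : K) * ↑(cc i j))
    (fun j => Subfield.sum_mem _ fun i _ =>
      Subfield.mul_mem _ (g i).2 (hFM (cc i j).2))
    (by rw [← hswap]; exact hg')
  have hindF : ∀ d : Fin n → K, (∀ i, d i ∈ F) →
      (∀ j ∈ t, ∑ i, d i * ↑(cc i j) = 0) → ∀ i, d i = 0 := by
    intro d hdF hdrel i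
    have h0 : ∑ i, (⟨d i, hdF i⟩ : ↥F) • x i = 0 := by
      show ∑ i, d i * x i = 0
      rw [hswap]
      exact Finset.sum_eq_zero fun j hj => by rw [hdrel j hj, zero_mul]
    exact congrArg Subtype.val (hxi _ h0 i)
  have hzero := rows_indep_transfer F t (fun i j => (↑(cc i j) : K))
    (fun i j => (cc i j).2) hindF (fun i => ↑(g i)) hrel
  intro i
  exact Subtype.ext (hzero i)
theorem mono_indep (p : ℕ) [Fact p.Prime] [CharP K p] (N : Subfield K) (A : Set K)
    (hA : ∀ a ∈ A, a ∉ N ⊔ Subfield.closure (A \ {a}))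
    (hap : ∀ a ∈ A, a ^ p ∈ N)
    (s : Finset K) :
    ↑s ⊆ A →
    ∀ (tt : Finset (K →₀ ℕ)), (∀ e ∈ tt, ↑e.support ⊆ (s : Set K) ∧ ∀ x, e x < p) →
    ∀ (c : (K →₀ ℕ) → K), (∀ e, c e ∈ N) →
      ∑ e ∈ tt, c e * mono e = 0 → ∀ e ∈ tt, c e = 0 := by
  classical
  induction s using Finset.induction_on with
  | empty =>
    intro _hs tt htt c hc hsum e he
    have he0 : ∀ e' ∈ tt, e' = 0 := by
      intro e' he'
      have := (htt e' he').1
      simp only [Finset.coe_empty, Set.subset_empty_iff] at this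
      exact Finsupp.support_eq_empty.mp (Finset.coe_eq_empty.mp this)
    have htts : tt = {0} := by
      apply Finset.Subset.antisymm
      · intro e' he'; simp [he0 e' he']
      · intro e' he'
        simp only [Finset.mem_singleton] at he'
        rw [he', ← he0 e he]; exact he
    rw [htts, Finset.sum_singleton] at hsum
    have : mono (0 : K →₀ ℕ) = 1 := by simp [mono]
    rw [this, mul_one] at hsum
    rw [he0 e he, hsum]
  | @insert a s ha hIH =>
    intro hs tt htt c hc hsum e he
    have haA : a ∈ A := hs (Finset.mem_insert_self a s)
    set E : Subfield K := N ⊔ Subfield.closure (A \ {a}) with hE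
    have haE : a ∉ E := hA a haA
    have hNE : N ≤ E := le_sup_left
    have hclE : Subfield.closure (A \ {a}) ≤ E := le_sup_right
    have hpowind := (li_subfield_iff E (fun i : Fin p => a ^ (i : ℕ))).mp
      (pow_indep p E a haE (hNE (hap a haA)))
    -- fiberwise decomposition
    have hmaps : ∀ e' ∈ tt, e' a ∈ Finset.range p :=
      fun e' he' => Finset.mem_range.mpr ((htt e' he').2 a)
    have hfib : ∑ j ∈ Finset.range p, ∑ e' ∈ tt.filter (fun e' => e' a = j),
        c e' * mono e' = ∑ e' ∈ tt, c e' * mono e' :=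
      Finset.sum_fiberwise_of_maps_to hmaps _
    have hmono_split : ∀ (e' : K →₀ ℕ), mono e' = mono (e'.erase a) * a ^ (e' a) := by
      intro e'
      rw [mono, mono, ← Finsupp.mul_prod_erase' e' a _ (fun i => pow_zero i), mul_comm]
    -- S j
    set S : ℕ → K := fun j => ∑ e' ∈ tt.filter (fun e' => e' a = j), c e' * mono (e'.erase a)
      with hS
    have hSsum : ∑ j ∈ Finset.range p, S j * a ^ j = 0 := by
      rw [← hsum, ← hfib]
      refine Finset.sum_congr rfl fun j hj => ?_
      rw [hS, Finset.sum_mul]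
      refine Finset.sum_congr rfl fun e' he' => ?_
      have hja : e' a = j := (Finset.mem_filter.mp he').2
      rw [hmono_split e', hja]
      ring
    have hSE : ∀ j, S j ∈ E := by
      intro j
      refine Subfield.sum_mem _ fun e' he' => Subfield.mul_mem _ (hNE (hc e')) ?_
      refine hclE (Subfield.prod_mem _ fun x hx => ?_)
      rw [Finsupp.support_erase] at hx
      have hxa : x ≠ a := Finset.ne_of_mem_erase hx
      have hxs : x ∈ e'.support := Finset.mem_of_mem_erase hx
      have hxA : x ∈ A \ {a} := by
        have := (htt e' (Finset.mem_filter.mp he').1).1 hxs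
        rcases Finset.mem_insert.mp this with h | h
        · exact absurd h hxa
        · exact ⟨hs (Finset.mem_insert_of_mem h), hxa⟩
      exact Subfield.pow_mem _ (Subfield.subset_closure hxA) _
    have hSzero : ∀ j ∈ Finset.range p, S j = 0 := by
      have h0 : ∑ i : Fin p, S ↑i * a ^ (i : ℕ) = 0 := by
        rw [← Finset.sum_range (fun j => S j * a ^ j)]; exact hSsum
      intro j hj
      have := hpowind Finset.univ (fun i : Fin p => S ↑i) (fun i => hSE ↑i) h0
        ⟨j, Finset.mem_range.mp hj⟩ (Finset.mem_univ _)
      exact this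
    -- apply IH to the fiber of e
    have hea : e a ∈ Finset.range p := hmaps e he
    have hfiber := hSzero (e a) hea
    -- rewrite S (e a) as a sum over erased exponents
    set u : Finset (K →₀ ℕ) := (tt.filter (fun e' => e' a = e a)).image
      (fun e' => e'.erase a) with hu
    have hinj : Set.InjOn (fun e' : K →₀ ℕ => e'.erase a)
        ↑(tt.filter (fun e' => e' a = e a)) := by
      intro x hx y hy hxy
      have hxa : x a = e a := by
        have := Finset.mem_coe.mp hx
        exact (Finset.mem_filter.mp this).2
      have hya : y a = e a := by
        have := Finset.mem_coe.mp hy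
        exact (Finset.mem_filter.mp this).2
      have hxy' : x.erase a = y.erase a := hxy
      have h1 : x.erase a + Finsupp.single a (x a) = y.erase a + Finsupp.single a (y a) := by
        rw [hxy', hxa, hya]
      rwa [Finsupp.erase_add_single, Finsupp.erase_add_single] at h1
    have hsum_u : ∑ e'' ∈ u, c (e'' + Finsupp.single a (e a)) * mono e'' = 0 := by
      rw [hu, Finset.sum_image (fun x hx y hy h => hinj hx hy h)]
      rw [← hfiber, hS]
      refine Finset.sum_congr rfl fun e' he' => ?_
      have hja : e' a = e a := (Finset.mem_filter.mp he').2
      rw [← hja, Finsupp.erase_add_single]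
    have hu_cond : ∀ e'' ∈ u, ↑e''.support ⊆ (s : Set K) ∧ ∀ x, e'' x < p := by
      intro e'' he''
      obtain ⟨e', he', rfl⟩ := Finset.mem_image.mp he''
      constructor
      · intro x hx
        rw [Finsupp.support_erase] at hx
        have hxa : x ≠ a := Finset.ne_of_mem_erase hx
        have := (htt e' (Finset.mem_filter.mp he').1).1 (Finset.mem_of_mem_erase hx)
        rcases Finset.mem_insert.mp this with h | h
        · exact absurd h hxa
        · exact h
      · intro x
        rcases eq_or_ne x a with rfl | hxa
        · simpa using (Fact.out : p.Prime).pos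
        · rw [Finsupp.erase_ne hxa]
          exact (htt e' (Finset.mem_filter.mp he').1).2 x
    have hIH' := hIH (fun x hx => hs (Finset.mem_insert_of_mem hx)) u hu_cond
      (fun e'' => c (e'' + Finsupp.single a (e a))) (fun e'' => hc _) hsum_u
      (e.erase a) (by
        rw [hu]
        exact Finset.mem_image_of_mem _ (Finset.mem_filter.mpr ⟨he, rfl⟩))
    have h2 : Finsupp.erase a e + Finsupp.single a (e a) = e := Finsupp.erase_add_single a e
    simpa only [h2] using hIH'
end AuxLemmas

/-- If `k ⊆ K` is a separable extension of characteristic `p > 0` and `A ⊆ K` is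
`p`-independent over `k` (no `a ∈ A` lies in the field generated by `K^p`, `k` and the
remaining elements of `A`), then the extension `k(A) ⊆ K` is separable. -/
theorem sepExt_adjoin_pIndep {K : Type*} [Field K] (p : ℕ) [Fact p.Prime]
    [CharP K p] (k : Subfield K) (hk : SepExt p k) (A : Set K)
    (hA : ∀ a ∈ A,
      a ∉ (⊤ : Subfield K).map (frobenius K p) ⊔ k ⊔ Subfield.closure (A \ {a})) :
    SepExt p (k ⊔ Subfield.closure A) := by
  
  classical
  intro n x hx hxi
  set P : Subfield K := (⊤ : Subfield K).map (frobenius K p) with hPdef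
  set F : Subfield K := k ⊔ Subfield.closure A with hFdef
  set Fp : Subfield K := F.map (frobenius K p) with hFpdef
  set kp : Subfield K := k.map (frobenius K p) with hkpdef
  set N : Subfield K := P ⊔ k with hNdef
  have hppos : 0 < p := (Fact.out : p.Prime).pos
  have hPmem : ∀ y : K, y ^ p ∈ P := fun y => ⟨y, Subfield.mem_top y, rfl⟩
  have hkpk : kp ≤ k := by
    rintro _ ⟨y, hy, rfl⟩; exact Subfield.pow_mem k hy p
  have hkF : k ≤ F := le_sup_left
  have hclAF : Subfield.closure A ≤ F := le_sup_right
  have hFpF : Fp ≤ F := by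
    rintro _ ⟨y, hy, rfl⟩; exact Subfield.pow_mem F hy p
  have hFpP : Fp ≤ P := by
    rintro _ ⟨y, _, rfl⟩; exact hPmem y
  have hkpFp : kp ≤ Fp := by
    rintro _ ⟨y, hy, rfl⟩; exact ⟨y, hkF hy, rfl⟩
  have hPN : P ≤ N := le_sup_left
  have hkN : k ≤ N := le_sup_right
  -- the `kp`-basis of `k`
  let W : Submodule ↥kp K :=
    { carrier := k
      add_mem' := fun h1 h2 => k.add_mem h1 h2
      zero_mem' := k.zero_mem
      smul_mem' := fun r y hy => k.mul_mem (hkpk r.2) hy }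
  let B := Module.Basis.ofVectorSpace ↥kp W
  set ι := Module.Basis.ofVectorSpaceIndex ↥kp W with hι
  let e : ι → K := fun s => ↑(B s)
  have hek : ∀ s, e s ∈ k := fun s => (B s).2
  have hekp : LinearIndependent ↥kp e :=
    B.linearIndependent.map' W.subtype W.ker_subtype
  have hkrep : ∀ c, c ∈ k → ∃ (tb : Finset ι) (d : ι → K),
      (∀ s, d s ∈ kp) ∧ c = ∑ s ∈ tb, d s * e s := by
    intro c hc
    set w : W := ⟨c, hc⟩ with hw
    refine ⟨(B.repr w).support, fun s => ↑(B.repr w s), fun s => (B.repr w s).2, ?_⟩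
    have h1 : ((B.repr w).sum fun i r => r • B i) = w := by
      rw [← Finsupp.linearCombination_apply]; exact B.linearCombination_repr w
    have h3 : W.subtype ((B.repr w).sum fun i r => r • B i) = c := congrArg _ h1
    rw [Finsupp.sum, map_sum] at h3
    rw [← h3]
    exact Finset.sum_congr rfl fun s _ => rfl
  -- independence of the `e s` over `P` (separability of `k`)
  have heP : ∀ (tb : Finset ι) (d : ι → K), (∀ s, d s ∈ P) →
      ∑ s ∈ tb, d s * e s = 0 → ∀ s ∈ tb, d s = 0 := by
    intro tb d hd hsum s hs
    set m := tb.card with hm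
    set emb : Fin m → ι := fun i => ↑(tb.equivFin.symm i) with hemb
    have hembinj : Function.Injective emb :=
      fun i j h => tb.equivFin.symm.injective (Subtype.ext h)
    have hindP : LinearIndependent ↥P (e ∘ emb) :=
      hk m (e ∘ emb) (fun i => hek _) (hekp.comp emb hembinj)
    have hsum' : ∑ i : Fin m, d (emb i) * e (emb i) = 0 := by
      rw [← hsum, ← Finset.sum_coe_sort tb (fun s => d s * e s)]
      exact Fintype.sum_equiv tb.equivFin.symm _ _ (fun i => rfl)
    have := (li_subfield_iff P (e ∘ emb)).mp hindP Finset.univ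
      (fun i => d (emb i)) (fun i => hd _) hsum' (tb.equivFin ⟨s, hs⟩)
      (Finset.mem_univ _)
    simpa [hemb] using this
  -- monomial independence over `N`
  have hA' : ∀ a ∈ A, a ∉ N ⊔ Subfield.closure (A \ {a}) := hA
  have hapN : ∀ a ∈ A, a ^ p ∈ N := fun a _ => hPN (hPmem a)
  -- the product family
  let Mon : Type _ := {ν : K →₀ ℕ // ↑ν.support ⊆ A ∧ ∀ y, ν y < p}
  let v : ι × Mon → K := fun q => e q.1 * mono ↑q.2
  -- independence of `v` over `P`
  have hvP : ∀ (t : Finset (ι × Mon)) (c : ι × Mon → K), (∀ q, c q ∈ P) →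
      ∑ q ∈ t, c q * v q = 0 → ∀ q ∈ t, c q = 0 := by
    intro t c hc hsum q hq
    set tm : Finset Mon := t.image Prod.snd with htm
    have hfib : ∑ μ ∈ tm, ∑ q' ∈ t.filter (fun q' => q'.2 = μ), c q' * v q'
        = ∑ q' ∈ t, c q' * v q' :=
      Finset.sum_fiberwise_of_maps_to (fun q' hq' => Finset.mem_image_of_mem _ hq') _
    set T : Mon → K := fun μ => ∑ q' ∈ t.filter (fun q' => q'.2 = μ), c q' * e q'.1
      with hT
    have hTsum : ∑ μ ∈ tm, T μ * mono ↑μ = 0 := by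
      rw [← hsum, ← hfib]
      refine Finset.sum_congr rfl fun μ hμ => ?_
      rw [hT, Finset.sum_mul]
      refine Finset.sum_congr rfl fun q' hq' => ?_
      have h2 : q'.2 = μ := (Finset.mem_filter.mp hq').2
      show c q' * e q'.1 * mono ↑μ = c q' * (e q'.1 * mono ↑q'.2)
      rw [h2, mul_assoc]
    have hTN : ∀ μ, T μ ∈ N := fun μ => Subfield.sum_mem _ fun q' _ =>
      Subfield.mul_mem _ (hPN (hc q')) (hkN (hek q'.1))
    set s0 : Finset K := tm.biUnion (fun μ => (↑μ : K →₀ ℕ).support) with hs0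
    have hs0A : ↑s0 ⊆ A := by
      intro y hy
      rw [hs0] at hy
      simp only [Finset.coe_biUnion, Set.mem_iUnion, Finset.mem_coe] at hy
      obtain ⟨μ, _, hyμ⟩ := hy
      exact μ.2.1 hyμ
    set tt : Finset (K →₀ ℕ) := tm.image Subtype.val with htt
    set cN : (K →₀ ℕ) → K := fun ν =>
      if h : ↑ν.support ⊆ A ∧ ∀ y, ν y < p then T ⟨ν, h⟩ else 0 with hcN
    have hcNmem : ∀ ν, cN ν ∈ N := by
      intro ν; rw [hcN]; dsimp only
      split
      · exact hTN _
      · exact Subfield.zero_mem N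
    have httcond : ∀ ν ∈ tt, ↑ν.support ⊆ (s0 : Set K) ∧ ∀ y, ν y < p := by
      intro ν hν
      obtain ⟨μ, hμ, rfl⟩ := Finset.mem_image.mp hν
      refine ⟨?_, μ.2.2⟩
      intro y hy
      rw [hs0]
      exact Finset.mem_coe.mpr (Finset.mem_biUnion.mpr ⟨μ, hμ, hy⟩)
    have httsum : ∑ ν ∈ tt, cN ν * mono ν = 0 := by
      rw [htt, Finset.sum_image (fun μ₁ _ μ₂ _ h => Subtype.ext h), ← hTsum]
      refine Finset.sum_congr rfl fun μ _ => ?_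
      congr 1
      rw [hcN]; dsimp only
      rw [dif_pos μ.2]
    have hTzero := mono_indep p N A hA' hapN s0 hs0A tt httcond cN hcNmem httsum
    have hq2 : (↑q.2 : K →₀ ℕ) ∈ tt := Finset.mem_image_of_mem _
      (Finset.mem_image_of_mem _ hq)
    have hTq : T q.2 = 0 := by
      have h5 := hTzero ↑q.2 hq2
      rw [hcN] at h5; dsimp only at h5
      rw [dif_pos q.2.2] at h5
      simpa using h5
    set tf : Finset ι := (t.filter (fun q' => q'.2 = q.2)).image Prod.fst with htf
    have hinjf : ∀ q₁ ∈ t.filter (fun q' => q'.2 = q.2),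
        ∀ q₂ ∈ t.filter (fun q' => q'.2 = q.2), q₁.1 = q₂.1 → q₁ = q₂ := by
      intro q₁ h₁ q₂ h₂ h
      exact Prod.ext h ((Finset.mem_filter.mp h₁).2.trans
        ((Finset.mem_filter.mp h₂).2).symm)
    have hsumf : ∑ u ∈ tf, c (u, q.2) * e u = 0 := by
      rw [htf, Finset.sum_image hinjf, ← hTq, hT]
      refine Finset.sum_congr rfl fun q' hq' => ?_
      have h2 : q'.2 = q.2 := (Finset.mem_filter.mp hq').2
      rw [← h2]
    have := heP tf (fun u => c (u, q.2)) (fun u => hc _) hsumf q.1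
      (Finset.mem_image_of_mem _ (Finset.mem_filter.mpr ⟨hq, rfl⟩))
    simpa using this
  -- spanning: `F` lies in the `Fp`-span of the `v`
  set S₀ : Submodule ↥Fp K := Submodule.span ↥Fp (Set.range v) with hS₀
  have hmono_memA : ∀ ν : K →₀ ℕ, ↑ν.support ⊆ A → mono ν ∈ Subfield.closure A :=
    fun ν hν => Subfield.prod_mem _ fun y hy => Subfield.pow_mem _
      (Subfield.subset_closure (hν hy)) _
  have hvF : ∀ q : ι × Mon, v q ∈ F :=
    fun q => F.mul_mem (hkF (hek q.1)) (hclAF (hmono_memA _ q.2.2.1))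
  let monzero : Mon := ⟨0, by simp, fun y => by simpa using hppos⟩
  have hmonzero : mono (↑monzero : K →₀ ℕ) = 1 := by
    rw [mono_def]
    exact Finsupp.prod_zero_index
  have hSk : ∀ c, c ∈ k → c ∈ S₀ := by
    intro c hc
    obtain ⟨tb, d, hd, rfl⟩ := hkrep c hc
    refine Submodule.sum_mem _ fun s _ => ?_
    have h6 : d s * e s = (⟨d s, hkpFp (hd s)⟩ : ↥Fp) • v (s, monzero) := by
      show d s * e s = d s * (e s * mono ↑monzero)
      rw [hmonzero, mul_one]
    rw [h6]
    exact Submodule.smul_mem _ _ (Submodule.subset_span ⟨(s, monzero), rfl⟩)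
  have hSF : ∀ y ∈ S₀, y ∈ F := by
    intro y hy
    induction hy using Submodule.span_induction with
    | mem z hz => obtain ⟨q, rfl⟩ := hz; exact hvF q
    | zero => exact Subfield.zero_mem F
    | add z₁ z₂ _ _ h1 h2 => exact Subfield.add_mem F h1 h2
    | smul r z _ h => exact Subfield.mul_mem F (hFpF r.2) h
  have hvmul : ∀ q q' : ι × Mon, v q * v q' ∈ S₀ := by
    rintro ⟨s, μ⟩ ⟨s', μ'⟩
    set ν : K →₀ ℕ := ↑μ + ↑μ' with hν
    have hνA : ↑ν.support ⊆ A := by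
      intro y hy
      have h7 := Finsupp.support_add hy
      rcases Finset.mem_union.mp h7 with h | h
      · exact μ.2.1 h
      · exact μ'.2.1 h
    have hmm : mono ↑μ * mono ↑μ' = mono ν := by
      rw [hν, mono_def, mono_def, mono_def,
        Finsupp.prod_add_index' (fun y => pow_zero y) (fun y m1 m2 => pow_add y m1 m2)]
    set ρ : K →₀ ℕ := ν.mapRange (· % p) (Nat.zero_mod p) with hρ
    set δ : K →₀ ℕ := ν.mapRange (· / p) (Nat.zero_div p) with hδ
    have hsplit : ν = ρ + p • δ := by
      ext y
      simp only [hρ, hδ, Finsupp.add_apply, Finsupp.mapRange_apply,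
        Finsupp.smul_apply, smul_eq_mul]
      exact (Nat.mod_add_div (ν y) p).symm
    have hmonop : (mono δ) ^ p = δ.prod fun y m => y ^ (p * m) := by
      rw [mono_def, Finsupp.prod, Finsupp.prod, ← Finset.prod_pow]
      exact Finset.prod_congr rfl fun y _ => by rw [← pow_mul, mul_comm]
    have hmono_ν : mono ν = mono ρ * (mono δ) ^ p := by
      rw [hsplit, mono_def,
        Finsupp.prod_add_index' (fun y => pow_zero y) (fun y m1 m2 => pow_add y m1 m2)]
      congr 1
      rw [hmonop]
      have h1 : (p • δ : K →₀ ℕ) = δ.mapRange (p * ·) (by simp) := by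
        ext y; simp
      rw [h1, Finsupp.prod_mapRange_index (fun y => pow_zero y)]
    have hρA : ↑ρ.support ⊆ A := fun y hy => hνA (Finsupp.support_mapRange hy)
    have hρlt : ∀ y, ρ y < p := fun y => Nat.mod_lt _ hppos
    set ρmon : Mon := ⟨ρ, hρA, hρlt⟩ with hρmon
    have hδA : ↑δ.support ⊆ A := fun y hy => hνA (Finsupp.support_mapRange hy)
    have hDp : (mono δ) ^ p ∈ Fp := ⟨mono δ, hclAF (hmono_memA δ hδA), rfl⟩
    obtain ⟨tb, d, hd, hrepr⟩ := hkrep (e s * e s') (k.mul_mem (hek s) (hek s'))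
    have key : v (s, μ) * v (s', μ') = ∑ u ∈ tb, (d u * (mono δ) ^ p) * v (u, ρmon) := by
      show (e s * mono ↑μ) * (e s' * mono ↑μ') = _
      calc (e s * mono ↑μ) * (e s' * mono ↑μ')
          = (e s * e s') * (mono ↑μ * mono ↑μ') := by ring
        _ = (∑ u ∈ tb, d u * e u) * (mono ρ * (mono δ) ^ p) := by
            rw [← hrepr, hmm, hmono_ν]
        _ = ∑ u ∈ tb, (d u * (mono δ) ^ p) * (e u * mono ρ) := by
            rw [Finset.sum_mul]
            exact Finset.sum_congr rfl fun u _ => by ring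
        _ = ∑ u ∈ tb, (d u * (mono δ) ^ p) * v (u, ρmon) := rfl
    rw [key]
    refine Submodule.sum_mem _ fun u _ => ?_
    exact Submodule.smul_mem _ (⟨d u * (mono δ) ^ p, Fp.mul_mem (hkpFp (hd u)) hDp⟩ : ↥Fp)
      (Submodule.subset_span ⟨(u, ρmon), rfl⟩)
  have hSmul : ∀ y ∈ S₀, ∀ z ∈ S₀, y * z ∈ S₀ := by
    intro y hy
    induction hy using Submodule.span_induction with
    | mem w hw =>
      obtain ⟨q, rfl⟩ := hw
      intro z hz
      induction hz using Submodule.span_induction with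
      | mem w' hw' => obtain ⟨q', rfl⟩ := hw'; exact hvmul q q'
      | zero => rw [mul_zero]; exact Submodule.zero_mem S₀
      | add z₁ z₂ _ _ h1 h2 => rw [mul_add]; exact Submodule.add_mem _ h1 h2
      | smul r z _ h => rw [mul_smul_comm]; exact Submodule.smul_mem _ _ h
    | zero => intro z hz; rw [zero_mul]; exact Submodule.zero_mem S₀
    | add y₁ y₂ _ _ h1 h2 =>
      intro z hz; rw [add_mul]; exact Submodule.add_mem _ (h1 z hz) (h2 z hz)
    | smul r w _ h =>
      intro z hz; rw [smul_mul_assoc]; exact Submodule.smul_mem _ _ (h z hz)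
  have hSpow : ∀ y ∈ S₀, ∀ m : ℕ, y ^ (m + 1) ∈ S₀ := by
    intro y hy m
    induction m with
    | zero => simpa using hy
    | succ m ih => rw [pow_succ]; exact hSmul _ ih _ hy
  have hSinv : ∀ y ∈ S₀, y⁻¹ ∈ S₀ := by
    intro y hy
    rcases eq_or_ne y 0 with rfl | hy0
    · rw [inv_zero]; exact Submodule.zero_mem S₀
    · have hyF : y ∈ F := hSF y hy
      have hscal : (y⁻¹) ^ p ∈ Fp := ⟨y⁻¹, Subfield.inv_mem F hyF, rfl⟩
      have h2 : p - 2 + 1 = p - 1 := by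
        have := (Fact.out : p.Prime).two_le; omega
      have hppow : y ^ (p - 1) ∈ S₀ := by
        have := hSpow y hy (p - 2); rwa [h2] at this
      have h3 : y ^ (p - 1) * y = y ^ p := by
        rw [← pow_succ, Nat.sub_add_cancel hppos]
      have h4 : ((y⁻¹) ^ p) * y ^ (p - 1) * y = 1 := by
        rw [mul_assoc, h3, ← mul_pow, inv_mul_cancel₀ hy0, one_pow]
      have hkey : y⁻¹ = ((y⁻¹) ^ p) * y ^ (p - 1) :=
        (eq_inv_of_mul_eq_one_left h4).symm
      rw [hkey]
      exact Submodule.smul_mem _ (⟨(y⁻¹) ^ p, hscal⟩ : ↥Fp) hppow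
  have hAS : ∀ a, a ∈ A → a ∈ S₀ := by
    intro a haA
    obtain ⟨tb, d, hd, hone⟩ := hkrep 1 k.one_mem
    have hsupp : ↑(Finsupp.single a 1).support ⊆ A := by
      intro y hy
      have h8 := Finsupp.support_single_subset hy
      simp only [Finset.mem_singleton] at h8
      rwa [h8]
    have hlt : ∀ y, Finsupp.single a (1 : ℕ) y < p := by
      intro y
      rcases eq_or_ne y a with rfl | hne
      · rw [Finsupp.single_eq_same]; exact (Fact.out : p.Prime).one_lt
      · rw [Finsupp.single_eq_of_ne hne]; exact hppos
    set μa : Mon := ⟨Finsupp.single a 1, hsupp, hlt⟩ with hμa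
    have hma : mono ↑μa = a := by
      show mono (Finsupp.single a 1) = a
      rw [mono_def, Finsupp.prod_single_index (pow_zero a), pow_one]
    have key : a = ∑ u ∈ tb, d u * v (u, μa) := by
      calc a = 1 * a := (one_mul a).symm
        _ = (∑ u ∈ tb, d u * e u) * a := by rw [← hone]
        _ = ∑ u ∈ tb, d u * (e u * a) := by
            rw [Finset.sum_mul]
            exact Finset.sum_congr rfl fun u _ => by ring
        _ = ∑ u ∈ tb, d u * v (u, μa) := by
            refine Finset.sum_congr rfl fun u _ => ?_
            show d u * (e u * a) = d u * (e u * mono ↑μa)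
            rw [hma]
    rw [key]
    exact Submodule.sum_mem _ fun u _ => Submodule.smul_mem _
      (⟨d u, hkpFp (hd u)⟩ : ↥Fp) (Submodule.subset_span ⟨(u, μa), rfl⟩)
  let Sf : Subfield K :=
    { carrier := S₀
      mul_mem' := fun {a b} ha hb => hSmul a ha b hb
      one_mem' := hSk 1 k.one_mem
      add_mem' := fun {a b} ha hb => S₀.add_mem ha hb
      zero_mem' := S₀.zero_mem
      neg_mem' := fun {a} ha => S₀.neg_mem ha
      inv_mem' := fun a ha => hSinv a ha }
  have hFS : F ≤ Sf := by
    rw [hFdef]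
    refine sup_le (fun c hc => hSk c hc) ?_
    rw [Subfield.closure_le]
    intro a ha
    exact hAS a ha
  have hxS : ∀ i, x i ∈ Submodule.span ↥Fp (Set.range v) := fun i => hFS (hx i)
  exact span_indep_transfer Fp P hFpP v hvP x hxS hxi
end

section
/- Mac Lane's theorem (algebraic independence part): if k ⊆ L is a finitely generated separable field extension of characteristic p > 0 and A is a p-basis of L over k, then the elements of A are algebraically independent over k. -/
open Polynomial in
theorem pow_lin_indep {L : Type*} [Field L] (p : ℕ) [Fact p.Prime] [CharP L p]
    (M0 : Subfield L) (a : L) (hap : a ^ p ∈ M0) (ha : a ∉ M0)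
    (m : Fin p → L) (hm : ∀ i, m i ∈ M0) (hrel : ∑ i : Fin p, m i * a ^ (i : ℕ) = 0) :
    ∀ i, m i = 0 := by
  have hp : p.Prime := Fact.out
  have halg : ∀ c : ↥M0, algebraMap ↥M0 L c = (c : L) := fun c => rfl
  have hirr : Irreducible (X ^ p - C (⟨a ^ p, hap⟩ : ↥M0)) := by
    refine X_pow_sub_C_irreducible_of_prime hp ?_
    intro b hb
    apply ha
    have hbp : (b : L) ^ p = a ^ p := by
      have := congrArg Subtype.val hb
      simpa using this
    have : (b : L) = a := by
      apply frobenius_inj L p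
      simpa only [frobenius_def] using hbp
    rw [← this]; exact b.2
  have haev : (aeval a) ((X : Polynomial ↥M0) ^ p - C (⟨a ^ p, hap⟩ : ↥M0)) = 0 := by
    simp [halg]
  have hmin : (X ^ p - C (⟨a ^ p, hap⟩ : ↥M0)) = minpoly ↥M0 a :=
    minpoly.eq_of_irreducible_of_monic hirr haev (Polynomial.monic_X_pow_sub_C _ hp.ne_zero)
  set q : Polynomial ↥M0 := ∑ i : Fin p, C (⟨m i, hm i⟩ : ↥M0) * X ^ (i : ℕ) with hqdef
  have hqa : (aeval a) q = 0 := by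
    rw [hqdef]
    simp only [map_sum, map_mul, aeval_C, map_pow, aeval_X, halg]
    exact hrel
  have hq0 : q = 0 := by
    by_contra hne
    have hdeg : q.degree < (p : ℕ) := by
      rw [hqdef]
      refine lt_of_le_of_lt (Polynomial.degree_sum_le _ _) ?_
      rw [Finset.sup_lt_iff (by exact_mod_cast WithBot.bot_lt_coe p)]
      intro i _
      exact lt_of_le_of_lt (Polynomial.degree_C_mul_X_pow_le _ _)
        (by exact_mod_cast i.2)
    have hle := minpoly.degree_le_of_ne_zero ↥M0 a hne hqa
    rw [← hmin, Polynomial.degree_X_pow_sub_C hp.pos] at hle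
    exact absurd (lt_of_le_of_lt hle hdeg) (lt_irrefl _)
  intro i
  have : q.coeff i = (⟨m i, hm i⟩ : ↥M0) := by
    rw [hqdef, Polynomial.finset_sum_coeff]
    rw [Finset.sum_eq_single i]
    · simp
    · intro j _ hji
      rw [Polynomial.coeff_C_mul, Polynomial.coeff_X_pow, if_neg, mul_zero]
      exact fun h => hji (Fin.val_injective h.symm)
    · simp
  rw [hq0] at this
  simpa using congrArg Subtype.val this.symm

theorem reduced_monomials_lin_indep {L : Type*} [Field L] (p : ℕ) [Fact p.Prime] [CharP L p]
    (k : Subfield L) (A : Set L)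
    (hindep : ∀ a ∈ A,
      a ∉ (⊤ : Subfield L).map (frobenius L p) ⊔ k ⊔ Subfield.closure (A \ {a})) :
    ∀ (m : ℕ) (b : Fin m → L), Function.Injective b → (∀ i, b i ∈ A) →
    ∀ (s : (Fin m → ℕ) → L) (R : Finset (Fin m → ℕ)),
    (∀ ν ∈ R, ∀ i, ν i < p) →
    (∀ ν ∈ R, s ν ∈ (⊤ : Subfield L).map (frobenius L p) ⊔ k ⊔
        Subfield.closure (A \ Set.range b)) →
    (∑ ν ∈ R, s ν * ∏ i, b i ^ ν i) = 0 →
    ∀ ν ∈ R, s ν = 0 := by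
  classical
  set F : Subfield L := (⊤ : Subfield L).map (frobenius L p) with hF
  have hFmem : ∀ x : L, x ^ p ∈ F := fun x => ⟨x, trivial, rfl⟩
  intro m
  induction m with
  | zero =>
    intro b _ _ s R _ _ hrel ν hν
    have hR : R = {ν} := by
      apply Finset.eq_singleton_iff_unique_mem.2
      exact ⟨hν, fun ν' _ => Subsingleton.elim ν' ν⟩
    rw [hR, Finset.sum_singleton] at hrel
    simpa using hrel
  | succ m IH =>
    intro b hbinj hbA s R hred hmem hrel ν hν
    set b' : Fin m → L := b ∘ Fin.castSucc with hb'
    have hb'inj : Function.Injective b' := hbinj.comp (Fin.castSucc_injective m)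
    have hb'A : ∀ i, b' i ∈ A := fun i => hbA _
    set a : L := b (Fin.last m) with halast
    -- the subfield over which powers of a are independent
    set M0 : Subfield L := F ⊔ k ⊔ Subfield.closure (A \ {a}) with hM0
    have haM0 : a ∉ M0 := hindep a (hbA _)
    -- rewrite relation: group by ν (last)
    have hsplit : ∀ ν : Fin (m+1) → ℕ,
        (∏ i, b i ^ ν i) = (∏ i : Fin m, b' i ^ ν i.castSucc) * a ^ ν (Fin.last m) := by
      intro ν; rw [Fin.prod_univ_castSucc]; rfl
    -- inner sums
    set w : ℕ → L := fun j =>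
      ∑ ν ∈ R.filter (fun ν => ν (Fin.last m) = j), s ν * ∏ i : Fin m, b' i ^ ν i.castSucc
      with hw
    have hgroup : ∑ j ∈ Finset.range p, w j * a ^ j = 0 := by
      rw [← hrel]
      rw [← Finset.sum_fiberwise_of_maps_to (g := fun ν => ν (Fin.last m))
        (t := Finset.range p) (fun ν hν => Finset.mem_range.2 (hred ν hν (Fin.last m)))
        (fun ν => s ν * ∏ i, b i ^ ν i)]
      refine Finset.sum_congr rfl fun j _ => ?_
      rw [hw]
      simp only []
      rw [Finset.sum_mul]
      refine Finset.sum_congr rfl fun ν₁ hν₁ => ?_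
      rw [hsplit ν₁, (Finset.mem_filter.1 hν₁).2, mul_assoc]
    -- each w j = 0 via pow_lin_indep
    have hw0 : ∀ j ∈ Finset.range p, w j = 0 := by
      have hwM0 : ∀ j, w j ∈ M0 := by
        intro j
        refine Subfield.sum_mem _ fun ν hν => Subfield.mul_mem _ ?_ ?_
        · refine SetLike.le_def.1 ?_ (hmem ν (Finset.mem_filter.1 hν).1)
          refine sup_le_sup le_rfl (Subfield.closure_mono ?_)
          intro x hx
          exact ⟨hx.1, fun hxa => hx.2 (hxa ▸ Set.mem_range_self (Fin.last m))⟩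
        · refine Subfield.prod_mem _ fun i _ => Subfield.pow_mem _ ?_ _
          refine SetLike.le_def.1 le_sup_right (Subfield.subset_closure ?_)
          refine ⟨hb'A i, fun hcon => ?_⟩
          have : b' i = a := hcon
          exact absurd (hbinj this) (Fin.castSucc_lt_last i).ne
      have := pow_lin_indep p M0 a
        (SetLike.le_def.1 (le_sup_left.trans le_sup_left) (hFmem a)) haM0
        (fun j : Fin p => w j) (fun j => hwM0 j)
        (by rw [Fin.sum_univ_eq_sum_range (fun j => w j * a ^ j) p]; exact hgroup)
      intro j hj
      exact this ⟨j, Finset.mem_range.1 hj⟩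
    -- now apply IH for the fiber of ν
    set j : ℕ := ν (Fin.last m) with hj
    have hjp : j ∈ Finset.range p := Finset.mem_range.2 (hred ν hν (Fin.last m))
    set Rj := R.filter (fun ν => ν (Fin.last m) = j) with hRj
    have hνRj : ν ∈ Rj := Finset.mem_filter.2 ⟨hν, rfl⟩
    set s' : (Fin m → ℕ) → L := fun ν' => s (Fin.snoc ν' j) with hs'
    have hsnoc : ∀ ν₁ ∈ Rj, (Fin.snoc (ν₁ ∘ Fin.castSucc) j : Fin (m+1) → ℕ) = ν₁ := by
      intro ν₁ hν₁
      funext i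
      refine Fin.lastCases ?_ (fun i => ?_) i
      · rw [Fin.snoc_last]; exact ((Finset.mem_filter.1 hν₁).2).symm
      · rw [Fin.snoc_castSucc]; rfl
    have hinj' : ∀ ν₁ ∈ Rj, ∀ ν₂ ∈ Rj,
        ν₁ ∘ Fin.castSucc = ν₂ ∘ Fin.castSucc → ν₁ = ν₂ := by
      intro ν₁ h₁ ν₂ h₂ h
      rw [← hsnoc ν₁ h₁, ← hsnoc ν₂ h₂, h]
    set R' : Finset (Fin m → ℕ) := Rj.image (fun ν₁ => ν₁ ∘ Fin.castSucc) with hR'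
    have hrel' : (∑ ν' ∈ R', s' ν' * ∏ i : Fin m, b' i ^ ν' i) = 0 := by
      rw [hR', Finset.sum_image hinj']
      rw [← hw0 j hjp, hw]
      refine Finset.sum_congr rfl fun ν₁ hν₁ => ?_
      rw [hs']
      simp only []
      rw [hsnoc ν₁ hν₁]
      rfl
    have := IH b' hb'inj hb'A s' R'
      (by
        intro ν' hν'
        obtain ⟨ν₁, hν₁, rfl⟩ := Finset.mem_image.1 hν'
        exact fun i => hred ν₁ (Finset.mem_filter.1 hν₁).1 _)
      (by
        intro ν' hν'
        obtain ⟨ν₁, hν₁, rfl⟩ := Finset.mem_image.1 hν'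
        rw [hs']
        simp only []
        rw [hsnoc ν₁ hν₁]
        refine SetLike.le_def.1 ?_ (hmem ν₁ (Finset.mem_filter.1 hν₁).1)
        refine sup_le_sup le_rfl (Subfield.closure_mono ?_)
        intro x hx
        refine ⟨hx.1, fun hcon => hx.2 ?_⟩
        obtain ⟨i, rfl⟩ := hcon
        exact ⟨i.castSucc, rfl⟩)
      hrel' (ν ∘ Fin.castSucc) (Finset.mem_image_of_mem _ hνRj)
    rw [hs'] at this
    simp only [] at this
    rw [hsnoc ν hνRj] at this
    exact this

set_option synthInstance.maxHeartbeats 1000000 in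
set_option maxHeartbeats 2000000 in
theorem lindisj_use {L : Type*} [Field L] (p : ℕ) [Fact p.Prime] [CharP L p]
    (k : Subfield L)
    (hsep : LinDisj (k.map (frobenius L p)) k ((⊤ : Subfield L).map (frobenius L p)))
    {ι : Type*} [Fintype ι] (v : ι → L)
    (hv : ∀ i, v i ∈ (⊤ : Subfield L).map (frobenius L p))
    (hvind : LinearIndependent ↥(k.map (frobenius L p)) v)
    (c : ι → L) (hc : ∀ i, c i ∈ k) (hsum : ∑ i, c i * v i = 0) :
    ∀ i, c i = 0 := by
  classical
  set K0 : Subfield L := k.map (frobenius L p) with hK0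
  set F' : Subfield L := (⊤ : Subfield L).map (frobenius L p) with hF'
  have hK0k : K0 ≤ k := by
    rintro x ⟨y, hy, rfl⟩
    exact (frobenius_def p y ▸ pow_mem hy p : frobenius L p y ∈ k)
  have hK0F' : K0 ≤ F' := by
    rintro x ⟨y, hy, rfl⟩
    exact ⟨y, trivial, rfl⟩
  set km : Submodule ↥K0 L :=
    { carrier := k,
      add_mem' := fun h1 h2 => add_mem h1 h2,
      zero_mem' := zero_mem _,
      smul_mem' := fun r x hx => mul_mem (hK0k r.2) hx } with hkm
  set W : Submodule ↥K0 L := Submodule.span ↥K0 (Set.range c) with hW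
  have : Module.Finite ↥K0 ↥W := Module.Finite.span_of_finite ↥K0 (Set.finite_range c)
  set u : Module.Basis (Fin (Module.finrank ↥K0 ↥W)) ↥K0 ↥W := Module.finBasis ↥K0 ↥W with hu
  set uL : Fin (Module.finrank ↥K0 ↥W) → L := fun j => ((u j : ↥W) : L) with huL
  have hWk : ∀ x : ↥W, (x : L) ∈ k := by
    intro x
    have hle : W ≤ km := Submodule.span_le.2 (by rintro y ⟨i, rfl⟩; exact hc i)
    exact hle x.2
  have huLind : LinearIndependent ↥K0 uL :=
    (u.linearIndependent).map' W.subtype (Submodule.ker_subtype W)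
  have huLF' : LinearIndependent ↥F' uL :=
    hsep _ uL (fun j => hWk (u j)) huLind
  -- coordinates
  set d : ι → Fin (Module.finrank ↥K0 ↥W) → ↥K0 :=
    fun i j => u.repr ⟨c i, Submodule.subset_span ⟨i, rfl⟩⟩ j with hd
  have hrepr : ∀ i, c i = ∑ j, (d i j : L) * uL j := by
    intro i
    have h1 := u.sum_repr ⟨c i, Submodule.subset_span ⟨i, rfl⟩⟩
    have h2 : ((∑ j, (u.repr ⟨c i, Submodule.subset_span ⟨i, rfl⟩⟩) j • u j : ↥W) : L) = c i :=
      congrArg (Subtype.val) h1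
    rw [← h2]
    push_cast
    rfl
  have hkey : ∑ j, (∑ i, (d i j : L) * v i) * uL j = 0 := by
    calc ∑ j, (∑ i, (d i j : L) * v i) * uL j
        = ∑ j, ∑ i, (d i j : L) * v i * uL j := by
          refine Finset.sum_congr rfl fun j _ => Finset.sum_mul _ _ _
      _ = ∑ i, ∑ j, (d i j : L) * v i * uL j := Finset.sum_comm
      _ = ∑ i, c i * v i := by
          refine Finset.sum_congr rfl fun i _ => ?_
          rw [hrepr i, Finset.sum_mul]
          exact Finset.sum_congr rfl fun j _ => by ring
      _ = 0 := hsum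
  set g : Fin (Module.finrank ↥K0 ↥W) → ↥F' :=
    fun j => ⟨∑ i, (d i j : L) * v i,
      Subfield.sum_mem _ fun i _ => Subfield.mul_mem _ (hK0F' (d i j).2) (hv i)⟩ with hg
  have hg0 : ∀ j, g j = 0 := by
    apply Fintype.linearIndependent_iff.1 huLF' g
    exact hkey
  have hd0 : ∀ i j, d i j = 0 := by
    intro i j
    refine Fintype.linearIndependent_iff.1 hvind (fun i => d i j) ?_ i
    have := congrArg Subtype.val (hg0 j)
    exact this
  intro i
  rw [hrepr i]
  simp [hd0]

open MvPolynomial in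
theorem key_vanish {L : Type*} [Field L] (p : ℕ) [Fact p.Prime] [CharP L p]
    (k : Subfield L)
    (hsep : LinDisj (k.map (frobenius L p)) k ((⊤ : Subfield L).map (frobenius L p)))
    (A : Set L)
    (hindep : ∀ a ∈ A,
      a ∉ (⊤ : Subfield L).map (frobenius L p) ⊔ k ⊔ Subfield.closure (A \ {a}))
    (n : ℕ) (a : Fin n → L) (hainj : Function.Injective a) (haA : ∀ i, a i ∈ A) :
    ∀ (N : ℕ) (f : MvPolynomial (Fin n) ↥k), f.totalDegree ≤ N →
      MvPolynomial.aeval a f = 0 → f = 0 := by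
  classical
  have hp : p.Prime := Fact.out
  have halg : ∀ r : ↥k, algebraMap ↥k L r = (r : L) := fun r => rfl
  have halginj : Function.Injective (algebraMap ↥k L) := fun x y h => Subtype.ext h
  intro N
  induction N using Nat.strong_induction_on with
  | _ N IHN =>
    intro f hdeg haev
    rcases Nat.eq_zero_or_pos N with hN | hN
    · -- degree 0 case
      subst hN
      have h0 : ∀ m ∈ f.support, m = 0 := by
        intro m hm
        have := (totalDegree_eq_zero_iff (Fin n) f).1 (Nat.le_zero.1 hdeg) m hm
        exact Finsupp.ext this
      have hfC : f = C (coeff 0 f) := by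
        apply MvPolynomial.ext
        intro m
        rw [coeff_C]
        by_cases hm0 : m = 0
        · subst hm0; simp
        · rw [if_neg (fun h => hm0 h.symm)]
          by_contra hne
          exact hm0 (h0 m (by rwa [MvPolynomial.mem_support_iff]))
      rw [hfC] at haev ⊢
      rw [aeval_C, halg] at haev
      have : coeff 0 f = 0 := Subtype.ext haev
      rw [this, map_zero]
    -- main case N ≥ 1
    set c : (Fin n →₀ ℕ) → L := fun e => algebraMap ↥k L (coeff e f) with hc
    set φ : (Fin n → ℕ) → L := fun ν => ∏ i, a i ^ ν i with hφ
    have hexp : ∑ e ∈ f.support, c e * φ ⇑e = 0 := by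
      rw [← haev]
      conv_rhs => rw [← support_sum_monomial_coeff f]
      rw [map_sum]
      refine Finset.sum_congr rfl fun e _ => ?_
      rw [aeval_monomial]
      congr 1
      exact (Finsupp.prod_fintype e (fun i k => a i ^ k) (fun i => pow_zero _)).symm
    have hdecomp : ∀ e : Fin n → ℕ, φ e = (φ (fun i => e i / p)) ^ p * φ (fun i => e i % p) := by
      intro e
      rw [hφ]
      simp only []
      rw [← Finset.prod_pow, ← Finset.prod_mul_distrib]
      refine Finset.prod_congr rfl fun i _ => ?_
      rw [← pow_mul, ← pow_add]
      congr 1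
      exact (Nat.div_add_mod' (e i) p).symm
    set S : (Fin n → ℕ) → L := fun ρ =>
      ∑ e ∈ f.support.filter (fun e => (fun i => e i % p) = ρ),
        c e * (φ (fun i => e i / p)) ^ p with hS
    set Img : Finset (Fin n → ℕ) := f.support.image (fun e => fun i => e i % p) with hImg
    have hgroup : ∑ ρ ∈ Img, S ρ * φ ρ = 0 := by
      rw [← hexp]
      rw [← Finset.sum_fiberwise_of_maps_to (g := fun e => fun i => (e : Fin n →₀ ℕ) i % p)
        (t := Img) (fun e he => Finset.mem_image_of_mem _ he) (fun e => c e * φ ⇑e)]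
      refine Finset.sum_congr rfl fun ρ _ => ?_
      rw [hS]
      simp only []
      rw [Finset.sum_mul]
      refine Finset.sum_congr rfl fun e he => ?_
      have hfe : (fun i => (e : Fin n →₀ ℕ) i % p) = ρ := (Finset.mem_filter.1 he).2
      rw [mul_assoc, ← hfe, ← hdecomp ⇑e]
    -- the subfield F ⊔ k ⊔ closure(A \ range a)
    have hS0 : ∀ ρ ∈ Img, S ρ = 0 := by
      refine reduced_monomials_lin_indep p k A hindep n a hainj haA S Img ?_ ?_ hgroup
      · intro ρ hρ i
        obtain ⟨e, _, rfl⟩ := Finset.mem_image.1 hρ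
        exact Nat.mod_lt _ hp.pos
      · intro ρ _
        refine Subfield.sum_mem _ fun e _ => Subfield.mul_mem _ ?_ ?_
        · exact SetLike.le_def.1 (le_sup_right.trans le_sup_left) ((coeff e f).2)
        · refine SetLike.le_def.1 (le_sup_left.trans le_sup_left) ?_
          exact ⟨φ (fun i => (e : Fin n →₀ ℕ) i / p), trivial, rfl⟩
    -- now show every coefficient vanishes
    suffices hco : ∀ e : Fin n →₀ ℕ, e ∈ f.support → coeff e f = 0 by
      apply MvPolynomial.ext
      intro m
      by_cases hm : m ∈ f.support
      · rw [hco m hm]; simp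
      · rw [MvPolynomial.notMem_support_iff.1 hm]; simp
    intro e0 he0
    set ρ : Fin n → ℕ := fun i => e0 i % p with hρdef
    have hρImg : ρ ∈ Img := Finset.mem_image_of_mem _ he0
    set ρF : Fin n →₀ ℕ := Finsupp.mapRange (· % p) (Nat.zero_mod p) e0 with hρF
    set qF : (Fin n →₀ ℕ) → (Fin n →₀ ℕ) :=
      fun e => Finsupp.mapRange (· / p) (Nat.zero_div p) e with hqF
    set Fl : Finset (Fin n →₀ ℕ) := f.support.filter (fun e => (fun i => e i % p) = ρ) with hFl
    have he0Fl : e0 ∈ Fl := Finset.mem_filter.2 ⟨he0, rfl⟩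
    have hrecon : ∀ e ∈ Fl, p • qF e + ρF = e := by
      intro e he
      have hfe : (fun i => e i % p) = ρ := (Finset.mem_filter.1 he).2
      apply Finsupp.ext
      intro i
      have : e i % p = e0 i % p := congrFun hfe i
      simp only [Finsupp.add_apply, Finsupp.smul_apply, Finsupp.mapRange_apply, smul_eq_mul,
        hρF, hqF]
      rw [← this]
      exact Nat.div_add_mod (e i) p
    have hqinj : ∀ e₁ ∈ Fl, ∀ e₂ ∈ Fl, qF e₁ = qF e₂ → e₁ = e₂ := by
      intro e₁ h₁ e₂ h₂ h
      rw [← hrecon e₁ h₁, ← hrecon e₂ h₂, h]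
    set Q : Finset (Fin n →₀ ℕ) := Fl.image qF with hQ
    have hsumQ : ∑ q ∈ Q, c (p • q + ρF) * (φ ⇑q) ^ p = 0 := by
      rw [hQ, Finset.sum_image hqinj]
      rw [← hS0 ρ hρImg, hS]
      exact Finset.sum_congr rfl fun e he => by rw [hrecon e he]; rfl
    -- linear independence over k^p of the p-th powers of the monomials φ q, q ∈ Q
    set v : ↥Q → L := fun q => (φ ⇑(q : Fin n →₀ ℕ)) ^ p with hv
    have hvF : ∀ q, v q ∈ (⊤ : Subfield L).map (frobenius L p) :=
      fun q => ⟨φ ⇑(q : Fin n →₀ ℕ), trivial, rfl⟩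
    have hdegQ : ∀ q ∈ Q, (∑ i, (q : Fin n →₀ ℕ) i) < N := by
      intro q hq
      obtain ⟨e, heFl, rfl⟩ := Finset.mem_image.1 hq
      have heN : (∑ i, e i) ≤ N := by
        refine le_trans ?_ (le_trans (MvPolynomial.le_totalDegree (Finset.mem_filter.1 heFl).1) hdeg)
        rw [Finsupp.sum_fintype _ _ (fun i => rfl)]
      have hple : p * (∑ i, (qF e) i) ≤ ∑ i, e i := by
        rw [Finset.mul_sum]
        refine Finset.sum_le_sum fun i _ => ?_
        simp only [Finsupp.mapRange_apply, hqF]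
        rw [mul_comm]
        exact Nat.div_mul_le_self (e i) p
      have h2 : 2 * (∑ i, (qF e) i) ≤ p * (∑ i, (qF e) i) :=
        Nat.mul_le_mul_right _ hp.two_le
      omega
    have hvind : LinearIndependent ↥(k.map (frobenius L p)) v := by
      rw [Fintype.linearIndependent_iff]
      intro g hg
      have hmemq : ∀ q : ↥Q, ∃ y, y ∈ k ∧ frobenius L p y = ((g q : L)) :=
        fun q => Subfield.mem_map.mp (g q).2
      choose x hxk hxp using hmemq
      have hfrob : frobenius L p (∑ q : ↥Q, x q * φ ⇑(q : Fin n →₀ ℕ)) = 0 := by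
        rw [map_sum]
        rw [← hg]
        refine Finset.sum_congr rfl fun q _ => ?_
        rw [map_mul, hxp q]
        show (g q : L) * frobenius L p (φ ⇑(q : Fin n →₀ ℕ)) = (g q : L) * (φ ⇑(q : Fin n →₀ ℕ)) ^ p
        rw [frobenius_def]
      have hzero : (∑ q : ↥Q, x q * φ ⇑(q : Fin n →₀ ℕ)) = 0 := by
        apply frobenius_inj L p
        rw [hfrob, map_zero]
      -- build the polynomial
      set g' : MvPolynomial (Fin n) ↥k :=
        ∑ q ∈ Q.attach, monomial (q : Fin n →₀ ℕ) (⟨x q, hxk q⟩ : ↥k) with hg'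
      have hg'deg : g'.totalDegree < N := by
        rw [hg']
        refine lt_of_le_of_lt (totalDegree_finset_sum _ _) ?_
        rw [Finset.sup_lt_iff (by exact_mod_cast hN)]
        intro q _
        refine lt_of_le_of_lt (le_trans (totalDegree_monomial_le _ _) ?_) (hdegQ q q.2)
        rw [Finsupp.sum_fintype _ _ (fun i => rfl)]
        exact le_of_eq (Finset.sum_congr rfl fun i _ => rfl)
      have hg'aev : MvPolynomial.aeval a g' = 0 := by
        rw [hg', map_sum, ← hzero]
        refine Finset.sum_congr rfl fun q _ => ?_
        rw [aeval_monomial, halg]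
        congr 1
        exact Finsupp.prod_fintype _ (fun i m => a i ^ m) (fun i => pow_zero _)
      have hg'0 : g' = 0 := IHN g'.totalDegree hg'deg g' le_rfl hg'aev
      intro q0
      have hcoe : coeff (q0 : Fin n →₀ ℕ) g' = ⟨x q0, hxk q0⟩ := by
        rw [hg', MvPolynomial.coeff_sum]
        rw [Finset.sum_eq_single q0]
        · rw [coeff_monomial, if_pos rfl]
        · intro q _ hqq0
          rw [coeff_monomial, if_neg]
          exact fun h => hqq0 (Subtype.ext h)
        · intro h
          exact absurd (Finset.mem_attach _ _) h
      have hx0 : x q0 = 0 := by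
        rw [hg'0] at hcoe
        simpa using congrArg Subtype.val hcoe.symm
      have : (g q0 : L) = 0 := by rw [← hxp q0, hx0, map_zero]
      exact Subtype.ext this
    have hc0 := lindisj_use p k hsep v hvF hvind
      (fun q => c (p • (q : Fin n →₀ ℕ) + ρF)) (fun q => (coeff _ f).2)
      (by
        rw [hv]
        have := Finset.sum_coe_sort Q (fun q => c (p • q + ρF) * (φ ⇑q) ^ p)
        rw [this]
        exact hsumQ)
    have hce0 : c e0 = 0 := by
      have := hc0 ⟨qF e0, Finset.mem_image_of_mem _ he0Fl⟩
      simp only [] at this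
      rwa [hrecon e0 he0Fl] at this
    exact halginj (by rw [map_zero]; exact hce0)

/-- Mac Lane's theorem, algebraic independence part: if `k ⊆ L` is a finitely generated
separable field extension of characteristic `p > 0` (`k` linearly disjoint from `L^p`
over `k^p`) and `A` is a `p`-basis of `L` over `k`, then the elements of `A` are
algebraically independent over `k`. -/
theorem macLane_algIndep {L : Type*} [Field L] (p : ℕ) [Fact p.Prime] [CharP L p]
    (k : Subfield L)
    (hfg : ∃ S : Finset L, k ⊔ Subfield.closure ↑S = ⊤)
    (hsep : LinDisj (k.map (frobenius L p)) k ((⊤ : Subfield L).map (frobenius L p)))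
    (A : Set L)
    (hindep : ∀ a ∈ A,
      a ∉ (⊤ : Subfield L).map (frobenius L p) ⊔ k ⊔ Subfield.closure (A \ {a}))
    (hgen : (⊤ : Subfield L).map (frobenius L p) ⊔ k ⊔ Subfield.closure A = ⊤) :
    AlgebraicIndependent ↥k ((↑) : A → L) := by
  classical
  apply algebraicIndependent_of_finite
  intro t htA htfin
  haveI : Fintype ↥t := htfin.fintype
  set e : Fin (Fintype.card ↥t) ≃ ↥t := (Fintype.equivFin ↥t).symm with he
  rw [← algebraicIndependent_equiv e, algebraicIndependent_iff]
  intro f hf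
  exact key_vanish p k hsep A hindep _ (fun j => ((e j : ↥t) : L))
    (Subtype.val_injective.comp e.injective) (fun j => htA (e j).2)
    f.totalDegree f le_rfl hf
end

section
/- Mac Lane's theorem (separable algebraicity part): if k ⊆ L is a finitely generated separable field extension of characteristic p > 0 and A is a p-basis of L over k, then L is separably algebraic over k(A). -/
/-- Mac Lane's theorem, separable algebraicity part: if `k ⊆ L` is a finitely generated
separable field extension of characteristic `p > 0` and `A` is a `p`-basis of `L` over
`k`, then `L` is separably algebraic over `k(A)`. -/
theorem macLane_sepAlgebraic {L : Type*} [Field L] (p : ℕ) [Fact p.Prime] [CharP L p]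
    (k : Subfield L)
    (hfg : ∃ S : Finset L, k ⊔ Subfield.closure ↑S = ⊤)
    (hsep : LinDisj (k.map (frobenius L p)) k ((⊤ : Subfield L).map (frobenius L p)))
    (A : Set L)
    (hindep : ∀ a ∈ A,
      a ∉ (⊤ : Subfield L).map (frobenius L p) ⊔ k ⊔ Subfield.closure (A \ {a}))
    (hgen : (⊤ : Subfield L).map (frobenius L p) ⊔ k ⊔ Subfield.closure A = ⊤) :
    ∀ x : L, IsSeparable ↥(k ⊔ Subfield.closure A) x := by
  set K := k ⊔ Subfield.closure A with hKdef
  -- `L` is essentially of finite type over `K`.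
  obtain ⟨S, hS⟩ := hfg
  haveI hEFT : Algebra.EssFiniteType ↥K L := by
    rw [Algebra.essFiniteType_iff]
    refine ⟨S, fun s => ?_⟩
    have hsub : Subring.closure ((k : Set L) ∪ ↑S) ≤ (Algebra.adjoin ↥K ((S : Set L))).toSubring := by
      rw [Subring.closure_le]
      refine Set.union_subset (fun c hc => ?_) (fun c hc => ?_)
      · have hcK : c ∈ K := SetLike.le_def.mp le_sup_left hc
        have := Subalgebra.algebraMap_mem (Algebra.adjoin ↥K ((S : Set L))) (⟨c, hcK⟩ : ↥K)
        exact this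
      · exact Algebra.subset_adjoin hc
    have hsmem : s ∈ Subfield.closure ((k : Set L) ∪ ↑S) := by
      have hle : k ⊔ Subfield.closure (↑S : Set L) ≤ Subfield.closure ((k : Set L) ∪ ↑S) :=
        sup_le (fun x hx => Subfield.subset_closure (Or.inl hx))
          (Subfield.closure_mono Set.subset_union_right)
      exact hle (hS ▸ Subfield.mem_top s)
    rw [Subfield.mem_closure_iff] at hsmem
    obtain ⟨y, hy, z, hz, hyz⟩ := hsmem
    by_cases hz0 : z = 0
    · refine ⟨1, Subalgebra.one_mem _, isUnit_one, ?_⟩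
      rw [mul_one]
      have : s = 0 := by rw [← hyz, hz0, div_zero]
      rw [this]; exact Subalgebra.zero_mem _
    · refine ⟨z, hsub hz, isUnit_iff_ne_zero.mpr hz0, ?_⟩
      have : s * z = y := by rw [← hyz, div_mul_cancel₀ _ hz0]
      rw [this]; exact hsub hy
  -- `L` is formally unramified over `K`: every element has zero differential.
  haveI hFU : Algebra.FormallyUnramified ↥K L := by
    constructor
    have hD : ∀ y : L, (KaehlerDifferential.D ↥K L) y = 0 := by
      intro y
      have hy : y ∈ Subfield.closure ((fun z : L => z ^ p) '' Set.univ ∪ (K : Set L)) := by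
        have hle : (⊤ : Subfield L).map (frobenius L p) ⊔ k ⊔ Subfield.closure A ≤
            Subfield.closure ((fun z : L => z ^ p) '' Set.univ ∪ (K : Set L)) := by
          refine sup_le (sup_le ?_ ?_) ?_
          · rintro x ⟨w, -, rfl⟩
            exact Subfield.subset_closure (Or.inl ⟨w, Set.mem_univ w, rfl⟩)
          · intro x hx
            exact Subfield.subset_closure (Or.inr (SetLike.le_def.mp le_sup_left hx))
          · intro x hx
            exact Subfield.subset_closure
              (Or.inr (SetLike.le_def.mp (le_sup_right : Subfield.closure A ≤ K) hx))
        exact hle (by rw [hgen]; exact Subfield.mem_top y)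
      induction hy using Subfield.closure_induction with
      | mem x hx =>
        rcases hx with ⟨w, -, rfl⟩ | hx
        · rw [Derivation.leibniz_pow, ← Nat.cast_smul_eq_nsmul L, CharP.cast_eq_zero L p,
            zero_smul]
        · exact (KaehlerDifferential.D ↥K L).map_algebraMap (⟨x, hx⟩ : ↥K)
      | one => exact Derivation.map_one_eq_zero _
      | add x y hx hy ihx ihy => rw [map_add, ihx, ihy, add_zero]
      | neg x hx ihx => rw [map_neg, ihx, neg_zero]
      | inv x hx ihx => rw [Derivation.leibniz_inv, ihx, smul_zero]
      | mul x y hx hy ihx ihy => rw [Derivation.leibniz, ihx, ihy, smul_zero, smul_zero, add_zero]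
    suffices h : (⊤ : Submodule L (Ω[L⁄↥K])) ≤ ⊥ from
      (subsingleton_iff_forall_eq 0).mpr fun y => h trivial
    rw [← KaehlerDifferential.span_range_derivation, Submodule.span_le]
    rintro _ ⟨y, rfl⟩
    simp [hD y]
  haveI := Algebra.FormallyUnramified.isSeparable ↥K L
  exact fun x => Algebra.IsSeparable.isSeparable ↥K x
end

section
/- Let k ⊆ K be a separable field extension of characteristic p > 0. A subset A of k is p-independent in k if and only if A is p-independent in K. -/
open Polynomial in
theorem pow_indep_s14 {K : Type*} [Field K] (p : ℕ) [Fact p.Prime] [CharP K p]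
    (L : Subfield K) (a : K) (hap : a ^ p ∈ L) (ha : a ∉ L)
    (d : Fin p → K) (hd : ∀ j, d j ∈ L)
    (hsum : ∑ j, d j * a ^ (j : ℕ) = 0) : ∀ j, d j = 0 := by
  have hp : p.Prime := Fact.out
  have haI : IsIntegral ↥L a := by
    refine ⟨X ^ p - C ⟨a ^ p, hap⟩, monic_X_pow_sub_C _ hp.ne_zero, ?_⟩
    simp only [Polynomial.eval₂_sub, Polynomial.eval₂_X_pow, Polynomial.eval₂_C]
    exact sub_eq_zero.mpr rfl
  set q := minpoly ↥L a with hq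
  have hqm : q.Monic := minpoly.monic haI
  have hdvd : q.map (algebraMap ↥L K) ∣ (X - C a) ^ p := by
    have h1 : q ∣ (X ^ p - C ⟨a ^ p, hap⟩) := by
      apply minpoly.dvd
      rw [map_sub, map_pow, Polynomial.aeval_X, Polynomial.aeval_C]
      exact sub_eq_zero.mpr rfl
    have h2 := Polynomial.map_dvd (algebraMap ↥L K) h1
    have h3 : (X ^ p - C (⟨a ^ p, hap⟩ : ↥L)).map (algebraMap ↥L K) = (X - C a) ^ p := by
      rw [Polynomial.map_sub, Polynomial.map_pow, Polynomial.map_X, Polynomial.map_C]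
      rw [sub_pow_char, show ((algebraMap ↥L K) ⟨a ^ p, hap⟩) = a ^ p from rfl, map_pow]
    rwa [h3] at h2
  obtain ⟨i, hip, hassoc⟩ := (dvd_prime_pow (Polynomial.prime_X_sub_C a) p).mp hdvd
  have heq : q.map (algebraMap ↥L K) = (X - C a) ^ i :=
    Polynomial.eq_of_monic_of_associated (hqm.map _) ((monic_X_sub_C a).pow i) hassoc
  have hi0 : i ≠ 0 := by
    intro h
    subst h
    simp only [pow_zero] at heq
    have := congrArg Polynomial.natDegree heq
    rw [Polynomial.natDegree_map, Polynomial.natDegree_one] at this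
    exact (minpoly.natDegree_pos haI).ne' this
  have hipp : i = p := by
    by_contra hne
    have hilt : i < p := lt_of_le_of_ne hip hne
    -- coefficient of X^(i-1)
    have hco : ((X - C a) ^ i).coeff (i - 1) = (-a) * (i : K) := by
      have : X - C a = X + C (-a) := by ring_nf; rw [map_neg]; ring
      rw [this, Polynomial.coeff_X_add_C_pow]
      have h1 : i - (i - 1) = 1 := by omega
      have h2 : i.choose (i - 1) = i := by
        have := Nat.choose_symm (n := i) (k := 1) (by omega)
        simpa [h1, Nat.choose_one_right] using this
      rw [h1, h2, pow_one]
    have hmem : (-a) * (i : K) ∈ L := by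
      rw [← hco, ← heq, Polynomial.coeff_map]
      exact (q.coeff (i - 1)).2
    have hine : (i : K) ≠ 0 := by
      rw [Ne, CharP.cast_eq_zero_iff K p i]
      intro hdv
      exact absurd (Nat.le_of_dvd (Nat.pos_of_ne_zero hi0) hdv) (not_le.mpr hilt)
    have : a ∈ L := by
      have h1 : a = -((-a) * (i : K) * ((i : K))⁻¹) := by
        field_simp
      rw [h1]
      exact L.neg_mem (L.mul_mem hmem (L.inv_mem (natCast_mem L i)))
    exact ha this
  have hdeg : q.degree = p := by
    have := congrArg Polynomial.degree heq
    rw [Polynomial.degree_map, hipp] at this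
    rw [this]
    rw [Polynomial.degree_pow, Polynomial.degree_X_sub_C]
    simp
  -- now the polynomial with coefficients d
  intro j
  by_contra hj
  set g : Polynomial ↥L := ∑ j : Fin p, C (⟨d j, hd j⟩ : ↥L) * X ^ (j : ℕ) with hg
  have hgco : g.coeff (j : ℕ) = ⟨d j, hd j⟩ := by
    rw [hg, Polynomial.finset_sum_coeff]
    rw [Finset.sum_eq_single j]
    · simp
    · intro b _ hbj
      rw [Polynomial.coeff_C_mul, Polynomial.coeff_X_pow]
      rw [if_neg (fun h => hbj (Fin.val_injective h.symm))]
      simp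
    · simp
  have hgne : g ≠ 0 := by
    intro h
    rw [h, Polynomial.coeff_zero] at hgco
    exact hj (congrArg Subtype.val hgco.symm)
  have hgev : Polynomial.aeval a g = 0 := by
    rw [hg, map_sum, ← hsum]
    refine Finset.sum_congr rfl fun j' _ => ?_
    rw [map_mul, Polynomial.aeval_C, map_pow, Polynomial.aeval_X]
    rfl
  have hgdeg : g.degree < p := by
    apply lt_of_le_of_lt (Polynomial.degree_sum_le _ _)
    rw [Finset.sup_lt_iff (by exact_mod_cast WithBot.bot_lt_coe p)]
    intro b _
    apply lt_of_le_of_lt (Polynomial.degree_C_mul_X_pow_le _ _)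
    exact_mod_cast b.2
  have := minpoly.degree_le_of_ne_zero ↥L a hgne hgev
  rw [← hq, hdeg] at this
  exact absurd (lt_of_le_of_lt this hgdeg) (lt_irrefl _)

-- helper: splitting a product over Fin (n+1) with Fin.cons exponents
theorem mono_cons {K : Type*} [Field K] {p n : ℕ} (v : Fin (n + 1) → K)
    (j : Fin p) (e : Fin n → Fin p) :
    (∏ i, v i ^ (((Fin.cons j e : Fin (n + 1) → Fin p) i : Fin p) : ℕ))
      = v 0 ^ (j : ℕ) * ∏ i, v i.succ ^ ((e i : ℕ)) := by
  rw [Fin.prod_univ_succ]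
  simp

theorem sum_cons {K : Type*} [AddCommMonoid K] {p n : ℕ} [NeZero p]
    (f : (Fin (n + 1) → Fin p) → K) :
    ∑ e, f e = ∑ j : Fin p, ∑ e' : Fin n → Fin p, f (Fin.cons j e') := by
  rw [← Equiv.sum_comp (Fin.consEquiv fun _ => Fin p) f, Fintype.sum_prod_type]
  rfl



theorem mono_indep_s14 {K : Type*} [Field K] (p : ℕ) [Fact p.Prime] [CharP K p]
    (F : Subfield K) :
    ∀ (n : ℕ) (v : Fin n → K), (∀ i, v i ^ p ∈ F) →
    (∀ i, v i ∉ F ⊔ Subfield.closure {x | ∃ j, j ≠ i ∧ v j = x}) →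
    ∀ c : (Fin n → Fin p) → K, (∀ e, c e ∈ F) →
      ∑ e, c e * ∏ i, v i ^ ((e i : Fin p) : ℕ) = 0 → ∀ e, c e = 0 := by
  have hp : p.Prime := Fact.out
  haveI : NeZero p := ⟨hp.ne_zero⟩
  intro n
  induction n with
  | zero =>
      intro v _ _ c hc hsum e
      rw [Fintype.sum_subsingleton _ e] at hsum
      simpa using hsum
  | succ n IH =>
      intro v hvp hvnot c hc hsum
      set a := v 0 with ha
      set L := F ⊔ Subfield.closure {x | ∃ j, j ≠ (0 : Fin (n + 1)) ∧ v j = x} with hL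
      have haL : a ∉ L := hvnot 0
      have hapL : a ^ p ∈ L := SetLike.le_def.mp le_sup_left (hvp 0)
      have htail_mem : ∀ (e' : Fin n → Fin p),
          (∏ i, v i.succ ^ ((e' i : ℕ))) ∈ L := by
        intro e'
        refine SetLike.le_def.mp le_sup_right (Subfield.prod_mem _ fun i _ => ?_)
        have hx : v i.succ ∈ Subfield.closure {x | ∃ j, j ≠ (0 : Fin (n + 1)) ∧ v j = x} :=
          Subfield.subset_closure ⟨i.succ, Fin.succ_ne_zero i, rfl⟩
        exact Subfield.pow_mem _ hx _
      set d : Fin p → K := fun j => ∑ e' : Fin n → Fin p, c (Fin.cons j e') * ∏ i, v i.succ ^ ((e' i : ℕ)) with hd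
      have hdL : ∀ j, d j ∈ L := by
        intro j
        refine Subfield.sum_mem _ fun e' _ => Subfield.mul_mem _ ?_ (htail_mem e')
        exact SetLike.le_def.mp le_sup_left (hc _)
      have hdsum : ∑ j, d j * a ^ (j : ℕ) = 0 := by
        rw [← hsum, sum_cons]
        refine Finset.sum_congr rfl fun j _ => ?_
        rw [hd, Finset.sum_mul]
        refine Finset.sum_congr rfl fun e' _ => ?_
        rw [mono_cons]
        ring
      have hdz : ∀ j, d j = 0 := pow_indep_s14 p L a hapL haL d hdL hdsum
      -- apply IH to the tails
      have hIH : ∀ (j : Fin p) (e' : Fin n → Fin p), c (Fin.cons j e') = 0 := by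
        intro j
        refine IH (fun i => v i.succ) (fun i => hvp i.succ) ?_ _ (fun e' => hc _) ?_
        · intro i hmem
          refine hvnot i.succ (SetLike.le_def.mp (sup_le_sup_left (Subfield.closure_mono ?_) F) hmem)
          rintro x ⟨j', hj', rfl⟩
          exact ⟨j'.succ, fun h => hj' (Fin.succ_injective n h), rfl⟩
        · exact hdz j
      intro e
      have : e = Fin.cons (e 0) (Fin.tail e) := (Fin.cons_self_tail e).symm
      rw [this]
      exact hIH _ _



theorem mono_span {K : Type*} [Field K] (p : ℕ) [Fact p.Prime]
    {n : ℕ} (M : Subfield K) (v : Fin n → K) (hv : ∀ i, v i ^ p ∈ M) :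
    ∀ x ∈ M ⊔ Subfield.closure (Set.range v),
      x ∈ Submodule.span ↥M (Set.range fun e : Fin n → Fin p => ∏ i, v i ^ (e i : ℕ)) := by
  have hp : p.Prime := Fact.out
  set V := Submodule.span ↥M (Set.range fun e : Fin n → Fin p => ∏ i, v i ^ (e i : ℕ)) with hV
  have hsmul : ∀ (t : K) (ht : t ∈ M) (x : K), x ∈ V → t * x ∈ V := by
    intro t ht x hx
    have := V.smul_mem (⟨t, ht⟩ : ↥M) hx
    exact this
  have hone : (1 : K) ∈ V := by
    apply Submodule.subset_span
    exact ⟨fun _ => ⟨0, hp.pos⟩, by simp⟩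
  have hmul : ∀ x ∈ V, ∀ y ∈ V, x * y ∈ V := by
    have hle : V * V ≤ V := by
      rw [hV, Submodule.span_mul_span, Submodule.span_le]
      rintro z ⟨x, ⟨e, rfl⟩, y, ⟨f, rfl⟩, rfl⟩
      simp only [SetLike.mem_coe]
      have key : (∏ i, v i ^ (e i : ℕ)) * ∏ i, v i ^ (f i : ℕ)
          = (∏ i, (v i ^ p) ^ (((e i : ℕ) + (f i : ℕ)) / p))
            * ∏ i, v i ^ ((((e i : ℕ) + (f i : ℕ)) % p)) := by
        rw [← Finset.prod_mul_distrib, ← Finset.prod_mul_distrib]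
        refine Finset.prod_congr rfl fun i _ => ?_
        rw [← pow_add, ← pow_mul, ← pow_add]
        congr 1
        exact (Nat.div_add_mod _ p).symm
      rw [key]
      refine hsmul _ (M.prod_mem fun i _ => M.pow_mem (hv i) _) _ ?_
      apply Submodule.subset_span
      exact ⟨fun i => ⟨((e i : ℕ) + (f i : ℕ)) % p, Nat.mod_lt _ hp.pos⟩, rfl⟩
    intro x hx y hy
    exact hle (Submodule.mul_mem_mul hx hy)
  have hinv : ∀ x ∈ V, x⁻¹ ∈ V := by
    intro x hx
    rcases eq_or_ne x 0 with rfl | hx0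
    · simpa using V.zero_mem
    · haveI : FiniteDimensional ↥M ↥V :=
        FiniteDimensional.span_of_finite ↥M (Set.finite_range _)
      let f : V →ₗ[↥M] V :=
        { toFun := fun y => ⟨x * y, hmul x hx y y.2⟩
          map_add' := fun y z => Subtype.ext (mul_add x y z)
          map_smul' := fun c y => Subtype.ext (mul_smul_comm c x (y : K)) }
      have hinj : Function.Injective f := by
        intro y z h
        have : x * (y : K) = x * (z : K) := congrArg Subtype.val h
        exact Subtype.ext (mul_left_cancel₀ hx0 this)
      obtain ⟨y, hy⟩ := (LinearMap.injective_iff_surjective.mp hinj) ⟨1, hone⟩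
      have hxy : x * (y : K) = 1 := congrArg Subtype.val hy
      rw [inv_eq_of_mul_eq_one_right hxy]
      exact y.2
  have hrw : M ⊔ Subfield.closure (Set.range v)
      = Subfield.closure ((M : Set K) ∪ Set.range v) := by
    rw [Subfield.closure_union, Subfield.closure_eq]
  intro x hx
  rw [hrw] at hx
  induction hx using Subfield.closure_induction with
  | mem x hxm =>
      rcases hxm with hxm | ⟨i, rfl⟩
      · have : x = x * 1 := (mul_one x).symm
        rw [this]
        exact hsmul x hxm 1 hone
      · apply Submodule.subset_span
        refine ⟨fun j => if j = i then ⟨1, hp.one_lt⟩ else ⟨0, hp.pos⟩, ?_⟩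
        show (∏ j, v j ^ (((if j = i then (⟨1, hp.one_lt⟩ : Fin p) else ⟨0, hp.pos⟩) : Fin p) : ℕ)) = v i
        rw [Finset.prod_eq_single i]
        · simp
        · intro b _ hb
          simp [if_neg hb]
        · simp
  | one => exact hone
  | add x y _ _ hx hy => exact V.add_mem hx hy
  | neg x _ hx => exact V.neg_mem hx
  | inv x _ hx => exact hinv x hx
  | mul x y _ _ hx hy => exact hmul x hx y hy



theorem exists_finset_subfield {K : Type*} [Field K] (Kp : Subfield K) (A : Set K) (a : K)
    (hmem : a ∈ Kp ⊔ Subfield.closure (A \ {a})) :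
    ∃ B : Finset K, ↑B ⊆ A \ {a} ∧ a ∈ Kp ⊔ Subfield.closure (B : Set K) := by
  classical
  have hrw : Kp ⊔ Subfield.closure (A \ {a})
      = Subfield.closure ((Kp : Set K) ∪ (A \ {a})) := by
    rw [Subfield.closure_union, Subfield.closure_eq]
  rw [hrw] at hmem
  have key : ∀ x ∈ Subfield.closure ((Kp : Set K) ∪ (A \ {a})),
      ∃ B : Finset K, ↑B ⊆ A \ {a} ∧ x ∈ Kp ⊔ Subfield.closure (B : Set K) := by
    intro x hx
    induction hx using Subfield.closure_induction with
    | mem x hxm =>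
        rcases hxm with hxm | hxm
        · exact ⟨∅, by simp, SetLike.le_def.mp le_sup_left hxm⟩
        · refine ⟨{x}, by simpa using hxm, SetLike.le_def.mp le_sup_right ?_⟩
          exact Subfield.subset_closure (by simp)
    | one => exact ⟨∅, by simp, Subfield.one_mem _⟩
    | add x y _ _ hx hy =>
        obtain ⟨B₁, hB₁, hx⟩ := hx
        obtain ⟨B₂, hB₂, hy⟩ := hy
        refine ⟨B₁ ∪ B₂, by push_cast; exact Set.union_subset hB₁ hB₂, ?_⟩
        have h1 : Kp ⊔ Subfield.closure (B₁ : Set K) ≤ Kp ⊔ Subfield.closure ((B₁ ∪ B₂ : Finset K) : Set K) :=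
          sup_le_sup_left (Subfield.closure_mono (by push_cast; exact Set.subset_union_left)) _
        have h2 : Kp ⊔ Subfield.closure (B₂ : Set K) ≤ Kp ⊔ Subfield.closure ((B₁ ∪ B₂ : Finset K) : Set K) :=
          sup_le_sup_left (Subfield.closure_mono (by push_cast; exact Set.subset_union_right)) _
        exact Subfield.add_mem _ (h1 hx) (h2 hy)
    | neg x _ hx =>
        obtain ⟨B, hB, hx⟩ := hx
        exact ⟨B, hB, Subfield.neg_mem _ hx⟩
    | inv x _ hx =>
        obtain ⟨B, hB, hx⟩ := hx
        exact ⟨B, hB, Subfield.inv_mem _ hx⟩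
    | mul x y _ _ hx hy =>
        obtain ⟨B₁, hB₁, hx⟩ := hx
        obtain ⟨B₂, hB₂, hy⟩ := hy
        refine ⟨B₁ ∪ B₂, by push_cast; exact Set.union_subset hB₁ hB₂, ?_⟩
        have h1 : Kp ⊔ Subfield.closure (B₁ : Set K) ≤ Kp ⊔ Subfield.closure ((B₁ ∪ B₂ : Finset K) : Set K) :=
          sup_le_sup_left (Subfield.closure_mono (by push_cast; exact Set.subset_union_left)) _
        have h2 : Kp ⊔ Subfield.closure (B₂ : Set K) ≤ Kp ⊔ Subfield.closure ((B₁ ∪ B₂ : Finset K) : Set K) :=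
          sup_le_sup_left (Subfield.closure_mono (by push_cast; exact Set.subset_union_right)) _
        exact Subfield.mul_mem _ (h1 hx) (h2 hy)
  exact key a hmem


set_option maxHeartbeats 400000 in
/-- If `k ⊆ K` is a separable extension of characteristic `p > 0` (i.e. `k` and `K^p`
are linearly disjoint over `k^p`), then a subset `A` of `k` is `p`-independent in `k`
(no `a ∈ A` lies in `k^p(A \ {a})`) if and only if it is `p`-independent in `K`. -/
theorem pIndep_iff_of_separable {K : Type*} [Field K] (p : ℕ) [Fact p.Prime]
    [CharP K p] (k : Subfield K)
    (hsep : LinDisj (k.map (frobenius K p)) k ((⊤ : Subfield K).map (frobenius K p)))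
    (A : Set K) (hA : A ⊆ (k : Set K)) :
    (∀ a ∈ A, a ∉ k.map (frobenius K p) ⊔ Subfield.closure (A \ {a}))
      ↔ (∀ a ∈ A, a ∉ (⊤ : Subfield K).map (frobenius K p) ⊔ Subfield.closure (A \ {a})) := by
  have hp : p.Prime := Fact.out
  haveI : NeZero p := ⟨hp.ne_zero⟩
  classical
  have hFKp : k.map (frobenius K p) ≤ (⊤ : Subfield K).map (frobenius K p) := by
    rintro x ⟨y, _, rfl⟩; exact ⟨y, trivial, rfl⟩
  constructor
  · intro hpk a haA hmem
    set F := k.map (frobenius K p) with hF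
    set Kp := (⊤ : Subfield K).map (frobenius K p) with hKp
    obtain ⟨B, hB, hmemB⟩ := exists_finset_subfield Kp A a hmem
    -- enumerate {a} ∪ B
    set l := B.toList with hl
    set v : Fin (l.length + 1) → K := Fin.cons a l.get with hv
    have hanotl : a ∉ l := by
      intro h
      exact absurd rfl ((hB (Finset.mem_coe.mpr (Finset.mem_toList.mp h))).2)
    have hget : Function.Injective l.get :=
      List.nodup_iff_injective_get.mp (Finset.nodup_toList B)
    have hlmem : ∀ j : Fin l.length, l.get j ∈ l := fun j => List.get_mem l j
    have hvinj : Function.Injective v := by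
      intro i j hij
      rcases Fin.eq_zero_or_eq_succ i with rfl | ⟨i', rfl⟩ <;>
        rcases Fin.eq_zero_or_eq_succ j with rfl | ⟨j', rfl⟩
      · rfl
      · rw [hv, Fin.cons_zero, Fin.cons_succ] at hij
        exact absurd (hij ▸ hlmem j') hanotl
      · rw [hv, Fin.cons_zero, Fin.cons_succ] at hij
        exact absurd (hij ▸ hlmem i') hanotl
      · rw [hv, Fin.cons_succ, Fin.cons_succ] at hij
        exact congrArg Fin.succ (hget hij)
    have hvA : ∀ i, v i ∈ A := by
      intro i
      rcases Fin.eq_zero_or_eq_succ i with rfl | ⟨i', rfl⟩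
      · exact haA
      · rw [hv, Fin.cons_succ]
        exact (hB (Finset.mem_coe.mpr (Finset.mem_toList.mp (hlmem i')))).1
    have hvF : ∀ i, v i ^ p ∈ F := fun i => Subfield.mem_map.mpr ⟨v i, hA (hvA i), rfl⟩
    have hvKp : ∀ i, v i ^ p ∈ Kp := fun i => Subfield.mem_map.mpr ⟨v i, trivial, rfl⟩
    have hvnot : ∀ i, v i ∉ F ⊔ Subfield.closure {x | ∃ j, j ≠ i ∧ v j = x} := by
      intro i hmem'
      refine hpk (v i) (hvA i)
        (SetLike.le_def.mp (sup_le_sup_left (Subfield.closure_mono ?_) F) hmem')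
      rintro x ⟨j, hj, rfl⟩
      exact ⟨hvA j, by simp only [Set.mem_singleton_iff]; exact fun h => hj (hvinj h)⟩
    -- linear independence of monomials over F
    have hliF : LinearIndependent ↥F
        (fun e : Fin (l.length + 1) → Fin p => ∏ i, v i ^ ((e i : ℕ))) := by
      rw [Fintype.linearIndependent_iff]
      intro g hg e
      have h0 : ∑ e, ((g e : K)) * ∏ i, v i ^ ((e i : ℕ)) = 0 := by
        rw [← hg]
        exact Finset.sum_congr rfl fun e' _ => by rw [Algebra.smul_def]; rfl
      exact Subtype.ext
        (mono_indep_s14 p F (l.length + 1) v hvF hvnot (fun e => (g e : K))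
          (fun e => (g e).2) h0 e)
    -- transfer to Kp via separability
    let σ := (Fintype.equivFin (Fin (l.length + 1) → Fin p)).symm
    have hw : ∀ i, ((fun e : Fin (l.length + 1) → Fin p => ∏ i, v i ^ ((e i : ℕ))) ∘ σ) i ∈ k :=
      fun i => k.prod_mem fun j _ => k.pow_mem (hA (hvA j)) _
    have hliKp' := hsep _ _ hw (hliF.comp σ σ.injective)
    have hliKp : LinearIndependent ↥Kp
        (fun e : Fin (l.length + 1) → Fin p => ∏ i, v i ^ ((e i : ℕ))) := by
      have h2 := hliKp'.comp σ.symm σ.symm.injective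
      have h3 : ((fun e : Fin (l.length + 1) → Fin p => ∏ i, v i ^ ((e i : ℕ))) ∘ σ) ∘ σ.symm
          = fun e : Fin (l.length + 1) → Fin p => ∏ i, v i ^ ((e i : ℕ)) := by
        funext e; simp
      rwa [h3] at h2
    -- a lies in the Kp-span of the monomials in B only
    have hBw : (B : Set K) ⊆ Set.range (fun i : Fin l.length => v i.succ) := by
      intro x hx
      obtain ⟨i, hi⟩ := List.mem_iff_get.mp (Finset.mem_toList.mpr (Finset.mem_coe.mp hx))
      exact ⟨i, by show v i.succ = x; rw [hv, Fin.cons_succ]; exact hi⟩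
    have hspan := mono_span p Kp (fun i : Fin l.length => v i.succ)
      (fun i => hvKp i.succ) a
      (SetLike.le_def.mp (sup_le_sup_left (le_trans (Subfield.closure_mono hBw) le_rfl) Kp) hmemB)
    obtain ⟨c, hc⟩ := (Submodule.mem_span_range_iff_exists_fun ↥Kp).mp hspan
    -- derive a nontrivial Kp-linear relation
    rw [Fintype.linearIndependent_iff] at hliKp
    set e₁ : Fin (l.length + 1) → Fin p :=
      Fin.cons ⟨1, hp.one_lt⟩ (fun _ => ⟨0, hp.pos⟩) with he₁
    set g : (Fin (l.length + 1) → Fin p) → ↥Kp := fun e =>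
      (if e 0 = ⟨0, hp.pos⟩ then c (Fin.tail e) else 0) - (if e = e₁ then 1 else 0) with hg
    have hmono1 : (∏ i, v i ^ ((e₁ i : ℕ))) = a := by
      rw [he₁, mono_cons]
      simp [hv]
    have hgsum : ∑ e, g e • (∏ i, v i ^ ((e i : ℕ))) = 0 := by
      have hsplit : ∀ e : Fin (l.length + 1) → Fin p,
          g e • (∏ i, v i ^ ((e i : ℕ)))
          = ((if e 0 = ⟨0, hp.pos⟩ then c (Fin.tail e) else 0) : ↥Kp) • (∏ i, v i ^ ((e i : ℕ)))
            - ((if e = e₁ then (1 : ↥Kp) else 0)) • (∏ i, v i ^ ((e i : ℕ))) := by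
        intro e; rw [hg]; rw [sub_smul]
      rw [Finset.sum_congr rfl fun e _ => hsplit e, Finset.sum_sub_distrib]
      have h2 : ∑ e, ((if e = e₁ then (1 : ↥Kp) else 0)) • (∏ i, v i ^ ((e i : ℕ))) = a := by
        rw [Finset.sum_eq_single e₁]
        · rw [if_pos rfl, one_smul, hmono1]
        · intro b _ hb; rw [if_neg hb, zero_smul]
        · intro h; exact absurd (Finset.mem_univ e₁) h
      have h1 : ∑ e : Fin (l.length + 1) → Fin p,
          ((if e 0 = ⟨0, hp.pos⟩ then c (Fin.tail e) else 0) : ↥Kp)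
          • (∏ i, v i ^ ((e i : ℕ))) = a := by
        rw [sum_cons (f := fun e : Fin (l.length + 1) → Fin p =>
          ((if e 0 = ⟨0, hp.pos⟩ then c (Fin.tail e) else 0) : ↥Kp)
          • (∏ i, v i ^ ((e i : ℕ))))]
        rw [Finset.sum_eq_single (⟨0, hp.pos⟩ : Fin p)]
        · rw [← hc]
          refine Finset.sum_congr rfl fun e' _ => ?_
          rw [Fin.cons_zero, if_pos rfl, Fin.tail_cons, mono_cons]
          simp
        · intro b _ hb
          refine Finset.sum_eq_zero fun e' _ => ?_
          simp only [Fin.cons_zero]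
          rw [if_neg hb, zero_smul]
        · intro h; exact absurd (Finset.mem_univ _) h
      rw [h1, h2, sub_self]
    have hcontra := hliKp g hgsum e₁
    rw [hg] at hcontra
    have he10 : e₁ 0 = (⟨1, hp.one_lt⟩ : Fin p) := by rw [he₁, Fin.cons_zero]
    have hne : (⟨1, hp.one_lt⟩ : Fin p) ≠ ⟨0, hp.pos⟩ := by
      intro h; exact absurd (congrArg Fin.val h) one_ne_zero
    have hcontra' : ((if e₁ 0 = ⟨0, hp.pos⟩ then c (Fin.tail e₁) else 0) : ↥Kp)
        - (if e₁ = e₁ then (1 : ↥Kp) else 0) = 0 := hcontra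
    rw [he10, if_neg hne, if_pos rfl, zero_sub, neg_eq_zero] at hcontra'
    exact one_ne_zero hcontra'
  · intro h a ha hmem
    exact h a ha (SetLike.le_def.mp (sup_le_sup_right hFKp _) hmem)
end

section
/- Let (K, δ) be a differentially perfect differential field of characteristic p > 0 (i.e., C_K = K^p, where C_K is the constant field) and let k be a differential subfield of K that is itself differentially perfect (C_k = k^p). Then the field extension k ⊆ K is separable, i.e., k is linearly disjoint from K^p over k^p. -/
section AuxDP

variable {K : Type*} [Field K]

private lemma dp_delta_one {δ : K → K}
    (hmul : ∀ x y : K, δ (x * y) = x * δ y + y * δ x) : δ 1 = 0 := by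
  have h := hmul 1 1
  simp only [one_mul] at h
  exact (left_eq_add.mp h)

private lemma dp_delta_zero {δ : K → K}
    (hadd : ∀ x y : K, δ (x + y) = δ x + δ y) : δ 0 = 0 := by
  have h := hadd 0 0
  simp only [add_zero] at h
  exact (left_eq_add.mp h)

private lemma dp_delta_sum {δ : K → K}
    (hadd : ∀ x y : K, δ (x + y) = δ x + δ y) {ι : Type*}
    (s : Finset ι) (f : ι → K) :
    δ (∑ i ∈ s, f i) = ∑ i ∈ s, δ (f i) := by
  classical
  induction s using Finset.induction with
  | empty => simpa using dp_delta_zero hadd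
  | insert _ _ h ih => rw [Finset.sum_insert h, Finset.sum_insert h, hadd, ih]

/-- Kolchin: a family of constants which is linearly independent over `k^p = C_k`
is linearly independent over `k`. -/
private lemma dp_indep_over_k (p : ℕ) [Fact p.Prime] [CharP K p] (δ : K → K)
    (hadd : ∀ x y : K, δ (x + y) = δ x + δ y)
    (hmul : ∀ x y : K, δ (x * y) = x * δ y + y * δ x)
    (k : Subfield K) (hδk : ∀ x ∈ k, δ x ∈ k)
    (hk : ∀ x ∈ k, (δ x = 0 ↔ ∃ y ∈ k, y ^ p = x))
    {ι : Type*} (v : ι → K) (hv : ∀ i, δ (v i) = 0)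
    (hF : LinearIndependent ↥(k.map (frobenius K p)) v) :
    LinearIndependent ↥k v := by
  classical
  rw [linearIndependent_iff'] at hF ⊢
  intro s
  induction s using Finset.strongInduction with
  | _ s ih =>
    intro g hg i hi
    by_contra hgi
    -- normalize the relation so that the `i`-th coefficient is `1`
    set b : ι → ↥k := fun j => g j * (g i)⁻¹ with hbdef
    have hbi : (b i : K) = 1 := by
      have : g i * (g i)⁻¹ = 1 := mul_inv_cancel₀ hgi
      simpa [hbdef] using congrArg (Subtype.val) this
    have hg' : ∑ j ∈ s, (g j : K) * v j = 0 := hg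
    have hbsum : ∑ j ∈ s, (b j : K) * v j = 0 := by
      have : ∑ j ∈ s, (b j : K) * v j = (∑ j ∈ s, (g j : K) * v j) * ((g i : K))⁻¹ := by
        rw [Finset.sum_mul]
        refine Finset.sum_congr rfl fun j hj => ?_
        push_cast [hbdef]
        ring
      rw [this, hg', zero_mul]
    -- differentiate the relation
    have hδrel : ∑ j ∈ s, δ ((b j : K)) * v j = 0 := by
      have h1 : δ (∑ j ∈ s, (b j : K) * v j) = 0 := by
        rw [hbsum, dp_delta_zero hadd]
      rw [dp_delta_sum hadd] at h1
      have h2 : ∀ j ∈ s, δ ((b j : K) * v j) = δ ((b j : K)) * v j := by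
        intro j hj
        rw [hmul, hv, mul_zero, zero_add, mul_comm]
      rwa [Finset.sum_congr rfl h2] at h1
    -- the derived coefficients as elements of `k`
    set g' : ι → ↥k := fun j => ⟨δ ((b j : K)), hδk _ (b j).2⟩ with hg'def
    have hδbi : δ ((b i : K)) = 0 := by rw [hbi]; exact dp_delta_one hmul
    have hsum' : ∑ j ∈ s.erase i, g' j • v j = 0 := by
      have heq : ∑ j ∈ s.erase i, δ ((b j : K)) * v j = ∑ j ∈ s, δ ((b j : K)) * v j :=
        Finset.sum_erase s (by rw [hδbi, zero_mul])
      show ∑ j ∈ s.erase i, δ ((b j : K)) * v j = 0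
      rw [heq]
      exact hδrel
    have hall : ∀ j ∈ s.erase i, g' j = 0 := ih _ (Finset.erase_ssubset hi) g' hsum'
    have hδb : ∀ j ∈ s, δ ((b j : K)) = 0 := by
      intro j hj
      by_cases hji : j = i
      · rw [hji]; exact hδbi
      · have := hall j (Finset.mem_erase.mpr ⟨hji, hj⟩)
        simpa [hg'def] using congrArg Subtype.val this
    -- hence each `b j` lies in `k^p`
    have hbF : ∀ j ∈ s, (b j : K) ∈ k.map (frobenius K p) := by
      intro j hj
      obtain ⟨y, hy, hyp⟩ := (hk _ (b j).2).mp (hδb j hj)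
      exact ⟨y, hy, by simpa [frobenius_def] using hyp⟩
    set G : ι → ↥(k.map (frobenius K p)) :=
      fun j => if h : ((b j : K)) ∈ k.map (frobenius K p) then ⟨(b j : K), h⟩ else 0 with hGdef
    have hGsum : ∑ j ∈ s, G j • v j = 0 := by
      have : ∀ j ∈ s, G j • v j = (b j : K) * v j := by
        intro j hj
        have : G j = ⟨(b j : K), hbF j hj⟩ := dif_pos (hbF j hj)
        rw [this]
        rfl
      rw [Finset.sum_congr rfl this, hbsum]
    have := hF s G hGsum i hi
    have : (G i : K) = 0 := by rw [this]; rfl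
    rw [hGdef] at this
    simp only [dif_pos (hbF i hi)] at this
    rw [hbi] at this
    exact one_ne_zero this

end AuxDP

/-- If `(K, δ)` is a differentially perfect differential field of characteristic
`p > 0` (its constants are exactly `K^p`) and `k` is a differentially perfect
differential subfield (its constants are exactly `k^p`), then the extension `k ⊆ K` is
separable: `k` is linearly disjoint from `K^p` over `k^p`. -/
theorem separable_of_differentially_perfect {K : Type*} [Field K] (p : ℕ)
    [Fact p.Prime] [CharP K p] (δ : K → K)
    (hadd : ∀ x y : K, δ (x + y) = δ x + δ y)
    (hmul : ∀ x y : K, δ (x * y) = x * δ y + y * δ x)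
    (hK : ∀ x : K, δ x = 0 ↔ ∃ y : K, y ^ p = x)
    (k : Subfield K) (hδk : ∀ x ∈ k, δ x ∈ k)
    (hk : ∀ x ∈ k, (δ x = 0 ↔ ∃ y ∈ k, y ^ p = x)) :
    LinDisj (k.map (frobenius K p)) k ((⊤ : Subfield K).map (frobenius K p)) := by
  classical
  intro n a hak hFa
  set F := k.map (frobenius K p) with hFdef
  set M := (⊤ : Subfield K).map (frobenius K p) with hMdef
  rw [Fintype.linearIndependent_iff]
  intro g hg
  set c : Fin n → K := fun i => (g i : K) with hcdef
  have hδc : ∀ x ∈ Set.range c, δ x = 0 := by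
    rintro x ⟨i, rfl⟩
    obtain ⟨y, -, hy⟩ := (g i).2
    exact (hK _).mpr ⟨y, by simpa [frobenius_def] using hy⟩
  -- extract a basis of the F-span of the coefficients
  obtain ⟨t, hts, hspan, htli⟩ := exists_linearIndependent ↥F (Set.range c)
  have htfin : t.Finite := (Set.finite_range c).subset hts
  haveI : Fintype ↥t := htfin.fintype
  set T : Finset K := htfin.toFinset with hTdef
  have hcoT : (↑T : Set K) = t := htfin.coe_toFinset
  rw [← hcoT] at hts hspan htli
  have hkli : LinearIndependent ↥k ((↑) : (↑T : Set K) → K) :=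
    dp_indep_over_k p δ hadd hmul k hδk hk _ (fun j => hδc _ (hts j.2)) htli
  -- write each coefficient in terms of the basis
  have hmem : ∀ i, c i ∈ Submodule.span ↥F (↑T : Set K) := by
    intro i
    rw [hspan]
    exact Submodule.subset_span ⟨i, rfl⟩
  have hex : ∀ i, ∃ f : K → ↥F, ∑ x ∈ T, f x • x = c i :=
    fun i => (Submodule.mem_span_finset.mp (hmem i)).imp fun _ h => h.2
  choose f hf using hex
  -- swap the order of summation
  have hswap : ∑ x ∈ T, (∑ i, ((f i x : K)) * a i) * x = 0 := by
    have h0 : ∑ i, c i * a i = 0 := hg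
    calc ∑ x ∈ T, (∑ i, ((f i x : K)) * a i) * x
        = ∑ x ∈ T, ∑ i, (f i x : K) * a i * x := by
          exact Finset.sum_congr rfl fun x _ => by rw [Finset.sum_mul]
      _ = ∑ i, ∑ x ∈ T, (f i x : K) * a i * x := Finset.sum_comm
      _ = ∑ i, (∑ x ∈ T, (f i x : K) * x) * a i := by
          refine Finset.sum_congr rfl fun i _ => ?_
          rw [Finset.sum_mul]
          exact Finset.sum_congr rfl fun x _ => by ring
      _ = ∑ i, c i * a i := by
          refine Finset.sum_congr rfl fun i _ => ?_
          rw [show ∑ x ∈ T, (f i x : K) * x = c i from hf i]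
      _ = 0 := h0
  -- the inner sums lie in `k`
  have hFk : F ≤ k := by
    rintro x ⟨y, hy, rfl⟩
    exact k.pow_mem hy p
  have hBk : ∀ x : K, (∑ i, ((f i x : K)) * a i) ∈ k := by
    intro x
    exact Subfield.sum_mem k fun i _ => k.mul_mem (hFk (f i x).2) (hak i)
  set B : K → ↥k := fun x => ⟨∑ i, ((f i x : K)) * a i, hBk x⟩ with hBdef
  -- independence of `t` over `k` kills the inner sums
  have hB0 : ∀ x ∈ T, B x = 0 := by
    intro x hx
    have hxt : x ∈ (↑T : Set K) := Finset.mem_coe.mpr hx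
    have hsum : ∑ j : (↑T : Set K), B ↑j • (↑j : K) = 0 := by
      have : ∑ j : (↑T : Set K), (B ↑j : K) * (↑j : K) = ∑ x ∈ T, (B x : K) * x :=
        Finset.sum_finset_coe (fun x => (B x : K) * x) T
      have h2 : ∑ x ∈ T, (B x : K) * x = 0 := hswap
      exact this.trans h2
    exact linearIndependent_iff'.mp hkli Finset.univ (fun j => B ↑j)
      (by simpa using hsum) ⟨x, hxt⟩ (Finset.mem_univ _)
  -- independence of `a` over `F` kills the basis coefficients
  have hf0 : ∀ i, ∀ x ∈ T, f i x = 0 := by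
    intro i x hx
    have hBx : ∑ j, (f j x) • a j = (0 : K) := by
      have := congrArg Subtype.val (hB0 x hx)
      simpa [hBdef, Subfield.smul_def, smul_eq_mul] using this
    exact Fintype.linearIndependent_iff.mp hFa (fun j => f j x) hBx i
  intro i
  have : c i = 0 := by
    rw [← hf i]
    refine Finset.sum_eq_zero fun x hx => ?_
    rw [hf0 i x hx]
    simp
  exact Subtype.ext this
end
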